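/- arXiv:2010.10010 — 4 statements merged into one kernel-verified Lean document; each statement's English description precedes it below -/
import Mathlib

section
/- (Minimum-distance lemma for the fast-fading converse.) Fix A > 0, σ > 0, a probability measure ν on ℝ with finite second moment, reals λ₁, λ₂ ≥ 0 with λ₁ + λ₂ < 1, and b > 0. Then there exists n₀ such that for all n ≥ n₀ the following holds: if u₁, u₂ ∈ ℝⁿ satisfy ‖u₁‖² ≤ nA and ‖u₂‖² ≤ nA, and there is a decoding-region family D (sets D_g ⊆ ℝⁿ indexed by g ∈ ℝⁿ with {(g,y) : y ∈ D_g} measurable) such that P(u₁, D) ≥ 1 − λ₁ and P(u₂, D) ≤ λ₂, then ‖u₁ − u₂‖ ≥ √(n·ε_n) = √A·n^{-(1+2b)/2}, where ε_n = A·n^{-2(1+b)}. -/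
open MeasureTheory ProbabilityTheory

/-- The `n`-fold product of the Gaussian measure `N(0,σ²)` on `ℝ`. -/
noncomputable def gaussPi (n : ℕ) (σ : ℝ) : Measure (Fin n → ℝ) :=
  Measure.pi fun _ => gaussianReal 0 ⟨σ ^ 2, sq_nonneg σ⟩

/-- Acceptance probability of a codeword `u` for the decoding-region family
`D` (indexed by the fading realization `g`) over the fast-fading Gaussian
channel: `P(u,D) = ∫ P_Z(g∘u + Z ∈ D_g) dν^⊗n(g)`. -/
noncomputable def accProb (n : ℕ) (σ : ℝ) (ν : Measure ℝ)
    (u : Fin n → ℝ) (D : (Fin n → ℝ) → Set (Fin n → ℝ)) : ℝ :=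
  ∫ g, (gaussPi n σ {z : Fin n → ℝ | (fun t => g t * u t + z t) ∈ D g}).toReal
    ∂(Measure.pi fun _ : Fin n => ν)

section aux

instance ff_instProb (μ σ : ℝ) : IsProbabilityMeasure (gaussianReal μ ⟨σ ^ 2, sq_nonneg σ⟩) :=
  instIsProbabilityMeasureGaussianReal μ _

noncomputable def ffρ (σ m x : ℝ) : ℝ := Real.exp ((2 * x * m - m ^ 2) / (2 * σ ^ 2))

lemma ffρ_nonneg (σ m x : ℝ) : 0 ≤ ffρ σ m x := (Real.exp_pos _).le

lemma measurable_ffρ (σ m : ℝ) : Measurable (ffρ σ m) := by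
  unfold ffρ; fun_prop

lemma ff_pdf_mul (σ : ℝ) (hσ : σ ≠ 0) (m x : ℝ) :
    gaussianPDFReal 0 ⟨σ ^ 2, sq_nonneg σ⟩ x * ffρ σ m x
      = gaussianPDFReal m ⟨σ ^ 2, sq_nonneg σ⟩ x := by
  unfold gaussianPDFReal ffρ NNReal.toReal
  dsimp only
  rw [mul_assoc, ← Real.exp_add]
  congr 1
  have h2 : σ ^ 2 ≠ 0 := pow_ne_zero 2 hσ
  field_simp
  ring

lemma ff_pdf_mul_sq (σ : ℝ) (hσ : σ ≠ 0) (m x : ℝ) :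
    gaussianPDFReal 0 ⟨σ ^ 2, sq_nonneg σ⟩ x * (ffρ σ m x) ^ 2
      = Real.exp (m ^ 2 / σ ^ 2) * gaussianPDFReal (2 * m) ⟨σ ^ 2, sq_nonneg σ⟩ x := by
  unfold gaussianPDFReal ffρ NNReal.toReal
  dsimp only
  simp only [← Real.exp_nat_mul]
  rw [mul_assoc, ← Real.exp_add]
  rw [show Real.exp (m ^ 2 / σ ^ 2) * ((√(2 * Real.pi * σ ^ 2))⁻¹ *
      Real.exp (-(x - 2 * m) ^ 2 / (2 * σ ^ 2)))
    = (√(2 * Real.pi * σ ^ 2))⁻¹ *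
      (Real.exp (m ^ 2 / σ ^ 2) * Real.exp (-(x - 2 * m) ^ 2 / (2 * σ ^ 2))) by ring,
    ← Real.exp_add]
  congr 2
  have h2 : σ ^ 2 ≠ 0 := pow_ne_zero 2 hσ
  field_simp
  ring

lemma ff_var_ne (σ : ℝ) (hσ : 0 < σ) : (⟨σ ^ 2, sq_nonneg σ⟩ : NNReal) ≠ 0 := by
  simp [← NNReal.coe_ne_zero, pow_ne_zero, hσ.ne']

lemma ff_gauss_eq (σ : ℝ) (hσ : 0 < σ) :
    gaussianReal 0 ⟨σ ^ 2, sq_nonneg σ⟩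
      = volume.withDensity
          (fun x => ((gaussianPDFReal 0 ⟨σ ^ 2, sq_nonneg σ⟩ x).toNNReal : ENNReal)) := by
  rw [gaussianReal_of_var_ne_zero 0 (ff_var_ne σ hσ)]; rfl

lemma ff_integrable_iff (σ : ℝ) (hσ : 0 < σ) (f : ℝ → ℝ) :
    Integrable f (gaussianReal 0 ⟨σ ^ 2, sq_nonneg σ⟩)
      ↔ Integrable (fun x => gaussianPDFReal 0 ⟨σ ^ 2, sq_nonneg σ⟩ x * f x) volume := by
  rw [ff_gauss_eq σ hσ,
    integrable_withDensity_iff_integrable_smul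
      (measurable_gaussianPDFReal 0 ⟨σ ^ 2, sq_nonneg σ⟩).real_toNNReal]
  constructor <;> intro h <;> refine h.congr (Filter.Eventually.of_forall fun x => ?_) <;>
    simp [NNReal.smul_def, Real.coe_toNNReal _ (gaussianPDFReal_nonneg 0 ⟨σ ^ 2, sq_nonneg σ⟩ x)]

lemma ff_integral_eq (σ : ℝ) (hσ : 0 < σ) (f : ℝ → ℝ) :
    ∫ x, f x ∂(gaussianReal 0 ⟨σ ^ 2, sq_nonneg σ⟩)
      = ∫ x, gaussianPDFReal 0 ⟨σ ^ 2, sq_nonneg σ⟩ x * f x := by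
  rw [ff_gauss_eq σ hσ,
    integral_withDensity_eq_integral_smul
      (measurable_gaussianPDFReal 0 ⟨σ ^ 2, sq_nonneg σ⟩).real_toNNReal]
  congr 1; ext x
  simp [NNReal.smul_def, Real.coe_toNNReal _ (gaussianPDFReal_nonneg 0 ⟨σ ^ 2, sq_nonneg σ⟩ x)]

lemma ff_integrable_rho (σ : ℝ) (hσ : 0 < σ) (m : ℝ) :
    Integrable (ffρ σ m) (gaussianReal 0 ⟨σ ^ 2, sq_nonneg σ⟩) := by
  rw [ff_integrable_iff σ hσ]
  simp only [ff_pdf_mul σ hσ.ne' m]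
  exact integrable_gaussianPDFReal m _

lemma ff_integral_rho (σ : ℝ) (hσ : 0 < σ) (m : ℝ) :
    ∫ x, ffρ σ m x ∂(gaussianReal 0 ⟨σ ^ 2, sq_nonneg σ⟩) = 1 := by
  rw [ff_integral_eq σ hσ]
  simp only [ff_pdf_mul σ hσ.ne' m]
  exact integral_gaussianPDFReal_eq_one m (ff_var_ne σ hσ)

lemma ff_integrable_rho_sq (σ : ℝ) (hσ : 0 < σ) (m : ℝ) :
    Integrable (fun x => ffρ σ m x ^ 2) (gaussianReal 0 ⟨σ ^ 2, sq_nonneg σ⟩) := by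
  rw [ff_integrable_iff σ hσ]
  simp only [ff_pdf_mul_sq σ hσ.ne' m]
  exact (integrable_gaussianPDFReal (2 * m) _).const_mul _

lemma ff_integral_rho_sq (σ : ℝ) (hσ : 0 < σ) (m : ℝ) :
    ∫ x, ffρ σ m x ^ 2 ∂(gaussianReal 0 ⟨σ ^ 2, sq_nonneg σ⟩)
      = Real.exp (m ^ 2 / σ ^ 2) := by
  rw [ff_integral_eq σ hσ]
  simp only [ff_pdf_mul_sq σ hσ.ne' m]
  rw [integral_const_mul, integral_gaussianPDFReal_eq_one (2 * m) (ff_var_ne σ hσ), mul_one]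

lemma ff_withDensity_rho (σ : ℝ) (hσ : 0 < σ) (m : ℝ) :
    (gaussianReal 0 ⟨σ ^ 2, sq_nonneg σ⟩).withDensity
        (fun x => ENNReal.ofReal (ffρ σ m x))
      = gaussianReal m ⟨σ ^ 2, sq_nonneg σ⟩ := by
  rw [gaussianReal_of_var_ne_zero 0 (ff_var_ne σ hσ),
    gaussianReal_of_var_ne_zero m (ff_var_ne σ hσ),
    ← withDensity_mul _ (measurable_gaussianPDF 0 ⟨σ ^ 2, sq_nonneg σ⟩)
      ((measurable_ffρ σ m).ennreal_ofReal)]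
  congr 1
  ext x
  simp only [Pi.mul_apply]
  unfold gaussianPDF
  simp only [
    ← ENNReal.ofReal_mul (gaussianPDFReal_nonneg 0 ⟨σ ^ 2, sq_nonneg σ⟩ x), ff_pdf_mul σ hσ.ne' m]

lemma ff_lintegral_pi_prod : ∀ {n : ℕ} (μ : Measure ℝ) [SigmaFinite μ]
    (f : Fin n → ℝ → ENNReal) (_ : ∀ i, Measurable (f i)),
    ∫⁻ z, ∏ i, f i (z i) ∂(Measure.pi fun _ => μ) = ∏ i, ∫⁻ x, f i x ∂μ := by
  intro n
  induction n with
  | zero =>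
    intro μ _ f hf
    simp [Measure.pi_of_empty]
  | succ n ih =>
    intro μ _ f hf
    have mp := (measurePreserving_piFinSuccAbove (fun _ : Fin (n + 1) => μ) 0)
    have key : ∀ z : Fin (n + 1) → ℝ,
        ∏ i, f i (z i)
          = f 0 ((MeasurableEquiv.piFinSuccAbove (fun _ => ℝ) 0) z).1
            * ∏ j : Fin n, f (Fin.succ j)
                (((MeasurableEquiv.piFinSuccAbove (fun _ => ℝ) 0) z).2 j) := by
      intro z
      rw [Fin.prod_univ_succ]
      rfl
    calc ∫⁻ z, ∏ i, f i (z i) ∂(Measure.pi fun _ => μ)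
        = ∫⁻ p : ℝ × (Fin n → ℝ),
            f 0 p.1 * ∏ j : Fin n, f (Fin.succ j) (p.2 j)
            ∂(μ.prod (Measure.pi fun _ => μ)) := by
          rw [← mp.lintegral_comp_emb (MeasurableEquiv.measurableEmbedding _)]
          exact lintegral_congr key
      _ = (∫⁻ x, f 0 x ∂μ) * ∫⁻ y : Fin n → ℝ, ∏ j : Fin n, f (Fin.succ j) (y j)
            ∂(Measure.pi fun _ => μ) :=
          lintegral_prod_mul (hf 0).aemeasurable
            (Finset.measurable_prod _ fun j _ =>
              (hf (Fin.succ j)).comp (measurable_pi_apply j)).aemeasurable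
      _ = (∫⁻ x, f 0 x ∂μ) * ∏ j : Fin n, ∫⁻ x, f (Fin.succ j) x ∂μ := by
          rw [ih μ _ fun j => hf (Fin.succ j)]
      _ = ∏ i, ∫⁻ x, f i x ∂μ :=
          (Fin.prod_univ_succ (fun i => ∫⁻ x, f i x ∂μ)).symm

lemma ff_pi_withDensity (σ : ℝ) (hσ : 0 < σ) {n : ℕ} (w : Fin n → ℝ) :
    Measure.pi (fun t => gaussianReal (w t) ⟨σ ^ 2, sq_nonneg σ⟩)
      = (Measure.pi fun _ : Fin n => gaussianReal 0 ⟨σ ^ 2, sq_nonneg σ⟩).withDensity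
          (fun z => ENNReal.ofReal (∏ t, ffρ σ (w t) (z t))) := by
  apply Measure.pi_eq
  intro s hs
  rw [withDensity_apply _ (MeasurableSet.univ_pi hs),
    ← lintegral_indicator (MeasurableSet.univ_pi hs)]
  have hpt : ∀ z : Fin n → ℝ,
      (Set.univ.pi s).indicator (fun z => ENNReal.ofReal (∏ t, ffρ σ (w t) (z t))) z
        = ∏ t, (s t).indicator (fun x => ENNReal.ofReal (ffρ σ (w t) x)) (z t) := by
    intro z
    by_cases hz : z ∈ Set.univ.pi s
    · rw [Set.indicator_of_mem hz,
        ENNReal.ofReal_prod_of_nonneg fun t _ => ffρ_nonneg σ (w t) (z t)]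
      exact Finset.prod_congr rfl fun t _ =>
        (Set.indicator_of_mem (hz t (Set.mem_univ t))
          (fun x => ENNReal.ofReal (ffρ σ (w t) x))).symm
    · rw [Set.indicator_of_notMem hz]
      obtain ⟨t, ht⟩ : ∃ t, z t ∉ s t := by
        by_contra hc
        push_neg at hc
        exact hz fun t _ => hc t
      exact (Finset.prod_eq_zero (Finset.mem_univ t)
        (Set.indicator_of_notMem ht _)).symm
  rw [lintegral_congr hpt,
    ff_lintegral_pi_prod _ _ fun t =>
      ((measurable_ffρ σ (w t)).ennreal_ofReal).indicator (hs t)]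
  refine Finset.prod_congr rfl fun t _ => ?_
  rw [lintegral_indicator (hs t), ← withDensity_apply _ (hs t), ff_withDensity_rho σ hσ]

lemma ff_pi_map (σ : ℝ) {n : ℕ} (w : Fin n → ℝ) :
    (Measure.pi fun _ : Fin n => gaussianReal 0 ⟨σ ^ 2, sq_nonneg σ⟩).map
        (fun z t => w t + z t)
      = Measure.pi (fun t => gaussianReal (w t) ⟨σ ^ 2, sq_nonneg σ⟩) := by
  refine (Measure.pi_eq fun s hs => ?_).symm
  have hmeas : Measurable fun (z : Fin n → ℝ) t => w t + z t :=
    measurable_pi_lambda _ fun t => (measurable_const_add (w t)).comp (measurable_pi_apply t)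
  rw [Measure.map_apply hmeas (MeasurableSet.univ_pi hs)]
  have hpre : (fun (z : Fin n → ℝ) t => w t + z t) ⁻¹' Set.univ.pi s
      = Set.univ.pi fun t => (fun x => w t + x) ⁻¹' s t := by
    ext z; simp [Set.mem_pi]
  rw [hpre, Measure.pi_pi]
  refine Finset.prod_congr rfl fun t _ => ?_
  rw [← Measure.map_apply (measurable_const_add (w t)) (hs t),
    gaussianReal_map_const_add (μ := 0) (v := ⟨σ ^ 2, sq_nonneg σ⟩) (w t), zero_add]

lemma ff_shift_measure (σ : ℝ) (hσ : 0 < σ) {n : ℕ} (w : Fin n → ℝ)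
    {s : Set (Fin n → ℝ)} (hs : MeasurableSet s) :
    (Measure.pi fun _ : Fin n => gaussianReal 0 ⟨σ ^ 2, sq_nonneg σ⟩)
        ((fun z t => w t + z t) ⁻¹' s)
      = ∫⁻ z in s, ENNReal.ofReal (∏ t, ffρ σ (w t) (z t))
          ∂(Measure.pi fun _ : Fin n => gaussianReal 0 ⟨σ ^ 2, sq_nonneg σ⟩) := by
  have hmeas : Measurable fun (z : Fin n → ℝ) t => w t + z t :=
    measurable_pi_lambda _ fun t => (measurable_const_add (w t)).comp (measurable_pi_apply t)
  rw [← Measure.map_apply hmeas hs, ff_pi_map σ, ff_pi_withDensity σ hσ,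
    withDensity_apply _ hs]

lemma ff_integrable_prod {n : ℕ} (μ : Measure ℝ) [SigmaFinite μ]
    (f : Fin n → ℝ → ℝ) (hf : ∀ i, Integrable (f i) μ) :
    Integrable (fun z : Fin n → ℝ => ∏ i, f i (z i)) (Measure.pi fun _ => μ) := by
  letI : MeasureSpace ℝ := ⟨μ⟩
  haveI : SigmaFinite (volume : Measure ℝ) := ‹SigmaFinite μ›
  exact Integrable.fintype_prod (𝕜 := ℝ) hf

lemma ff_integral_prod {n : ℕ} (μ : Measure ℝ) [SigmaFinite μ]
    (f : Fin n → ℝ → ℝ) :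
    ∫ z : Fin n → ℝ, ∏ i, f i (z i) ∂(Measure.pi fun _ => μ)
      = ∏ i, ∫ x, f i x ∂μ := by
  letI : MeasureSpace ℝ := ⟨μ⟩
  haveI : SigmaFinite (volume : Measure ℝ) := ‹SigmaFinite μ›
  exact integral_fintype_prod_eq_prod (𝕜 := ℝ) f

lemma ff_integrable_R (σ : ℝ) (hσ : 0 < σ) {n : ℕ} (w : Fin n → ℝ) :
    Integrable (fun z : Fin n → ℝ => ∏ t, ffρ σ (w t) (z t))
      (Measure.pi fun _ : Fin n => gaussianReal 0 ⟨σ ^ 2, sq_nonneg σ⟩) :=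
  ff_integrable_prod _ _ fun t => ff_integrable_rho σ hσ (w t)

lemma ff_integral_R (σ : ℝ) (hσ : 0 < σ) {n : ℕ} (w : Fin n → ℝ) :
    ∫ z : Fin n → ℝ, ∏ t, ffρ σ (w t) (z t)
      ∂(Measure.pi fun _ : Fin n => gaussianReal 0 ⟨σ ^ 2, sq_nonneg σ⟩) = 1 := by
  rw [ff_integral_prod]
  simp [ff_integral_rho σ hσ]

lemma ff_integrable_R_sq (σ : ℝ) (hσ : 0 < σ) {n : ℕ} (w : Fin n → ℝ) :
    Integrable (fun z : Fin n → ℝ => (∏ t, ffρ σ (w t) (z t)) ^ 2)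
      (Measure.pi fun _ : Fin n => gaussianReal 0 ⟨σ ^ 2, sq_nonneg σ⟩) := by
  have := ff_integrable_prod (n := n) (gaussianReal 0 ⟨σ ^ 2, sq_nonneg σ⟩)
    (fun t x => ffρ σ (w t) x ^ 2) (fun t => ff_integrable_rho_sq σ hσ (w t))
  refine this.congr (Filter.Eventually.of_forall fun z => ?_)
  simpa using Finset.prod_pow Finset.univ 2 (fun t => ffρ σ (w t) (z t))

lemma ff_integral_R_sq (σ : ℝ) (hσ : 0 < σ) {n : ℕ} (w : Fin n → ℝ) :
    ∫ z : Fin n → ℝ, (∏ t, ffρ σ (w t) (z t)) ^ 2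
      ∂(Measure.pi fun _ : Fin n => gaussianReal 0 ⟨σ ^ 2, sq_nonneg σ⟩)
      = Real.exp ((∑ t, w t ^ 2) / σ ^ 2) := by
  calc ∫ z : Fin n → ℝ, (∏ t, ffρ σ (w t) (z t)) ^ 2
        ∂(Measure.pi fun _ : Fin n => gaussianReal 0 ⟨σ ^ 2, sq_nonneg σ⟩)
      = ∫ z : Fin n → ℝ, ∏ t, ffρ σ (w t) (z t) ^ 2
        ∂(Measure.pi fun _ : Fin n => gaussianReal 0 ⟨σ ^ 2, sq_nonneg σ⟩) := by
        congr 1; ext z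
        exact (Finset.prod_pow Finset.univ 2 (fun t => ffρ σ (w t) (z t))).symm
    _ = ∏ t, ∫ x, ffρ σ (w t) x ^ 2 ∂(gaussianReal 0 ⟨σ ^ 2, sq_nonneg σ⟩) :=
        ff_integral_prod _ (fun t x => ffρ σ (w t) x ^ 2)
    _ = Real.exp ((∑ t, w t ^ 2) / σ ^ 2) := by
        simp_rw [ff_integral_rho_sq σ hσ, ← Real.exp_sum, Finset.sum_div]

lemma ff_L1_le_L2 {α : Type*} [MeasurableSpace α] (μ : Measure α)
    [IsProbabilityMeasure μ] (f : α → ℝ) (hf : Integrable f μ)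
    (hf2 : Integrable (fun x => f x ^ 2) μ) :
    ∫ x, |f x| ∂μ ≤ Real.sqrt (∫ x, f x ^ 2 ∂μ) := by
  set m := ∫ x, |f x| ∂μ with hm
  have hm0 : 0 ≤ m := integral_nonneg fun x => abs_nonneg _
  have habs : Integrable (fun x => |f x|) μ := hf.abs
  have hexp : ∀ x, (|f x| - m) ^ 2 = f x ^ 2 - 2 * m * |f x| + m ^ 2 := by
    intro x; rw [sub_sq, sq_abs]; ring
  have h0 : 0 ≤ ∫ x, (|f x| - m) ^ 2 ∂μ := integral_nonneg fun x => sq_nonneg _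
  have h1 : Integrable (fun x => f x ^ 2 - 2 * m * |f x|) μ := by
    exact hf2.sub (habs.const_mul (2 * m))
  have h2 : Integrable (fun x => 2 * m * |f x|) μ := by
    exact habs.const_mul (2 * m)
  have hint : ∫ x, (|f x| - m) ^ 2 ∂μ = ∫ x, f x ^ 2 ∂μ - m ^ 2 := by
    calc ∫ x, (|f x| - m) ^ 2 ∂μ
        = ∫ x, f x ^ 2 - 2 * m * |f x| + m ^ 2 ∂μ := by
          exact integral_congr_ae (Filter.Eventually.of_forall hexp)
      _ = (∫ x, f x ^ 2 ∂μ - ∫ x, 2 * m * |f x| ∂μ) + ∫ _, m ^ 2 ∂μ := by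
          rw [integral_add h1 (integrable_const _), integral_sub hf2 h2]
      _ = ∫ x, f x ^ 2 ∂μ - m ^ 2 := by
          rw [integral_const_mul, integral_const]
          simp [← hm]
          ring
  have : m ^ 2 ≤ ∫ x, f x ^ 2 ∂μ := by linarith [hint ▸ h0]
  calc m ≤ Real.sqrt (m ^ 2) := by rw [Real.sqrt_sq hm0]
    _ ≤ Real.sqrt (∫ x, f x ^ 2 ∂μ) := Real.sqrt_le_sqrt this

lemma ff_key (σ : ℝ) (hσ : 0 < σ) {n : ℕ} (w : Fin n → ℝ)
    {s : Set (Fin n → ℝ)} (hs : MeasurableSet s) :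
    |((Measure.pi fun _ : Fin n => gaussianReal 0 ⟨σ ^ 2, sq_nonneg σ⟩)
        ((fun z t => w t + z t) ⁻¹' s)).toReal
      - ((Measure.pi fun _ : Fin n => gaussianReal 0 ⟨σ ^ 2, sq_nonneg σ⟩) s).toReal|
      ≤ Real.sqrt (Real.exp ((∑ t, w t ^ 2) / σ ^ 2) - 1) := by
  set Q := (Measure.pi fun _ : Fin n => gaussianReal 0 ⟨σ ^ 2, sq_nonneg σ⟩) with hQ
  haveI : IsProbabilityMeasure Q := by
    rw [hQ]; infer_instance
  set R := fun z : Fin n → ℝ => ∏ t, ffρ σ (w t) (z t) with hR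
  have hRnn : ∀ z, 0 ≤ R z := fun z =>
    Finset.prod_nonneg fun t _ => ffρ_nonneg σ (w t) (z t)
  have hRint : Integrable R Q := ff_integrable_R σ hσ w
  have hR2int : Integrable (fun z => R z ^ 2) Q := ff_integrable_R_sq σ hσ w
  have h1 : (Q ((fun z t => w t + z t) ⁻¹' s)).toReal = ∫ z in s, R z ∂Q := by
    rw [hQ, ff_shift_measure σ hσ w hs, ← hQ]
    have := ofReal_integral_eq_lintegral_ofReal (hRint.restrict (s := s))
      (Filter.Eventually.of_forall fun z => hRnn z)
    rw [← this, ENNReal.toReal_ofReal (integral_nonneg fun z => hRnn z)]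
  have h2 : (Q s).toReal = ∫ _ in s, (1 : ℝ) ∂Q := by
    rw [setIntegral_const, smul_eq_mul, mul_one, measureReal_def]
  have h3 : (Q ((fun z t => w t + z t) ⁻¹' s)).toReal - (Q s).toReal
      = ∫ z in s, (R z - 1) ∂Q := by
    rw [h1, h2, ← integral_sub (hRint.restrict) (integrable_const _)]
  rw [h3]
  have habs : |∫ z in s, (R z - 1) ∂Q| ≤ ∫ z, |R z - 1| ∂Q := by
    calc |∫ z in s, (R z - 1) ∂Q| = ‖∫ z in s, (R z - 1) ∂Q‖ :=
          (Real.norm_eq_abs _).symm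
      _ ≤ ∫ z in s, ‖R z - 1‖ ∂Q := norm_integral_le_integral_norm _
      _ = ∫ z in s, |R z - 1| ∂Q := by simp [Real.norm_eq_abs]
      _ ≤ ∫ z, |R z - 1| ∂Q :=
          setIntegral_le_integral (hRint.sub (integrable_const _)).abs
            (Filter.Eventually.of_forall fun z => abs_nonneg _)
  refine habs.trans ?_
  have hCS := ff_L1_le_L2 Q (fun z => R z - 1) (hRint.sub (integrable_const _))
    (by
      have : Integrable (fun z => R z ^ 2 - 2 * R z + 1) Q :=
        (hR2int.sub (hRint.const_mul 2)).add (integrable_const 1)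
      refine this.congr (Filter.Eventually.of_forall fun z => ?_)
      ring)
  refine hCS.trans ?_
  apply Real.sqrt_le_sqrt
  have : ∫ z, (R z - 1) ^ 2 ∂Q = ∫ z, (R z ^ 2 - 2 * R z + 1) ∂Q :=
    integral_congr_ae (Filter.Eventually.of_forall fun z => by ring)
  have e1 : Integrable (fun z => R z ^ 2 - 2 * R z) Q := by
    exact hR2int.sub (hRint.const_mul 2)
  have e2 : Integrable (fun z => 2 * R z) Q := by exact hRint.const_mul 2
  rw [this, integral_add e1 (integrable_const _),
    integral_sub hR2int e2, integral_const_mul, integral_const]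
  rw [hR] at *
  rw [ff_integral_R_sq σ hσ w, ff_integral_R σ hσ w]
  simp
  linarith

lemma ff_min_bound {x : ℝ} (hx : 0 ≤ x) :
    min 1 (Real.sqrt (Real.exp x - 1)) ≤ Real.sqrt 2 * Real.sqrt x := by
  rw [← Real.sqrt_mul (by norm_num : (0:ℝ) ≤ 2)]
  rcases le_or_gt x (1 / 2) with h | h
  · refine (min_le_right _ _).trans (Real.sqrt_le_sqrt ?_)
    have h1 : Real.exp x ≤ Real.exp (1 / 2) := Real.exp_le_exp.2 h
    have hi : Real.exp (-x) * Real.exp x = 1 := by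
      rw [← Real.exp_add]; simp
    have h2 : Real.exp x - 1 ≤ x * Real.exp x := by
      nlinarith [Real.add_one_le_exp (-x), Real.exp_pos x]
    have hsq : Real.exp (1 / 2) ^ 2 = Real.exp 1 := by
      rw [← Real.exp_nat_mul]; norm_num
    have h3 : Real.exp (1 / 2) ≤ 2 := by
      nlinarith [Real.exp_one_lt_d9, Real.exp_pos (1/2 : ℝ)]
    nlinarith [Real.exp_pos x]
  · refine (min_le_left _ _).trans ?_
    rw [show (1:ℝ) = Real.sqrt 1 from (Real.sqrt_one).symm]
    exact Real.sqrt_le_sqrt (by linarith)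

lemma ff_l2_le_l1 {n : ℕ} (a : Fin n → ℝ) :
    Real.sqrt (∑ t, a t ^ 2) ≤ ∑ t, |a t| := by
  have h : ∑ t, a t ^ 2 ≤ (∑ t, |a t|) ^ 2 := by
    have step : ∀ t ∈ Finset.univ, a t ^ 2 ≤ |a t| * ∑ s, |a s| := by
      intro t _
      have h1 : |a t| ≤ ∑ s, |a s| :=
        Finset.single_le_sum (fun s _ => abs_nonneg (a s)) (Finset.mem_univ t)
      calc a t ^ 2 = |a t| * |a t| := by rw [← sq_abs]; ring
        _ ≤ |a t| * ∑ s, |a s| := mul_le_mul_of_nonneg_left h1 (abs_nonneg _)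
    calc ∑ t, a t ^ 2 ≤ ∑ t, |a t| * ∑ s, |a s| := Finset.sum_le_sum step
      _ = (∑ t, |a t|) ^ 2 := by rw [← Finset.sum_mul]; ring
  calc Real.sqrt (∑ t, a t ^ 2) ≤ Real.sqrt ((∑ t, |a t|) ^ 2) := Real.sqrt_le_sqrt h
    _ = ∑ t, |a t| := Real.sqrt_sq (Finset.sum_nonneg fun t _ => abs_nonneg _)

lemma ff_l1_le_l2 {n : ℕ} (a : Fin n → ℝ) :
    ∑ t, |a t| ≤ Real.sqrt n * Real.sqrt (∑ t, a t ^ 2) := by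
  have h : (∑ t, |a t|) ^ 2 ≤ (n : ℝ) * ∑ t, a t ^ 2 := by
    have := sq_sum_le_card_mul_sum_sq (s := Finset.univ) (f := fun t : Fin n => |a t|)
    simpa [sq_abs] using this
  have h0 : 0 ≤ ∑ t, |a t| := Finset.sum_nonneg fun t _ => abs_nonneg _
  calc ∑ t, |a t| = Real.sqrt ((∑ t, |a t|) ^ 2) := (Real.sqrt_sq h0).symm
    _ ≤ Real.sqrt ((n : ℝ) * ∑ t, a t ^ 2) := Real.sqrt_le_sqrt h
    _ = Real.sqrt n * Real.sqrt (∑ t, a t ^ 2) := Real.sqrt_mul (Nat.cast_nonneg n) _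

lemma ff_pointwise (σ : ℝ) (hσ : 0 < σ) {n : ℕ} (u₁ u₂ : Fin n → ℝ)
    (D : (Fin n → ℝ) → Set (Fin n → ℝ))
    (hE : MeasurableSet {p : (Fin n → ℝ) × (Fin n → ℝ) | p.2 ∈ D p.1})
    (g : Fin n → ℝ) :
    |(gaussPi n σ {z : Fin n → ℝ | (fun t => g t * u₁ t + z t) ∈ D g}).toReal
      - (gaussPi n σ {z : Fin n → ℝ | (fun t => g t * u₂ t + z t) ∈ D g}).toReal|
      ≤ Real.sqrt 2 / σ * ∑ t, |u₁ t - u₂ t| * |g t| := by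
  haveI : IsProbabilityMeasure (gaussPi n σ) := by
    unfold gaussPi; infer_instance
  have hDg : MeasurableSet (D g) := by
    have := hE.preimage (measurable_prodMk_left : Measurable (Prod.mk g))
    exact this
  set w : Fin n → ℝ := fun t => g t * (u₁ t - u₂ t) with hw
  set s' : Set (Fin n → ℝ) := (fun z t => g t * u₂ t + z t) ⁻¹' (D g) with hs'def
  have hs' : MeasurableSet s' :=
    hDg.preimage (measurable_pi_lambda _ fun t =>
      (measurable_const_add (g t * u₂ t)).comp (measurable_pi_apply t))
  have hset1 : {z : Fin n → ℝ | (fun t => g t * u₁ t + z t) ∈ D g}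
      = (fun z t => w t + z t) ⁻¹' s' := by
    ext z
    have harg : (fun t => g t * u₂ t + (w t + z t)) = fun t => g t * u₁ t + z t := by
      funext t; simp only [hw]; ring
    simp only [Set.mem_setOf_eq, Set.mem_preimage, hs'def, harg]
  have hset2 : {z : Fin n → ℝ | (fun t => g t * u₂ t + z t) ∈ D g} = s' := rfl
  rw [hset1, hset2]
  have htriv : |(gaussPi n σ ((fun z t => w t + z t) ⁻¹' s')).toReal
      - (gaussPi n σ s').toReal| ≤ 1 := by
    have b1 : (gaussPi n σ ((fun z t => w t + z t) ⁻¹' s')).toReal ≤ 1 := by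
      simpa using ENNReal.toReal_mono (by simp) (prob_le_one)
    have b2 : (gaussPi n σ s').toReal ≤ 1 := by
      simpa using ENNReal.toReal_mono (by simp) (prob_le_one)
    have c1 : 0 ≤ (gaussPi n σ ((fun z t => w t + z t) ⁻¹' s')).toReal :=
      ENNReal.toReal_nonneg
    have c2 : 0 ≤ (gaussPi n σ s').toReal := ENNReal.toReal_nonneg
    rw [abs_sub_le_iff]; constructor <;> linarith
  have hkey := ff_key σ hσ w hs'
  have hmin : |(gaussPi n σ ((fun z t => w t + z t) ⁻¹' s')).toReal
      - (gaussPi n σ s').toReal|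
      ≤ min 1 (Real.sqrt (Real.exp ((∑ t, w t ^ 2) / σ ^ 2) - 1)) :=
    le_min htriv hkey
  refine hmin.trans ?_
  have hx : (0:ℝ) ≤ (∑ t, w t ^ 2) / σ ^ 2 :=
    div_nonneg (Finset.sum_nonneg fun t _ => sq_nonneg _) (sq_nonneg σ)
  refine (ff_min_bound hx).trans ?_
  have hsq : Real.sqrt ((∑ t, w t ^ 2) / σ ^ 2) = Real.sqrt (∑ t, w t ^ 2) / σ := by
    rw [Real.sqrt_div (Finset.sum_nonneg fun t _ => sq_nonneg _),
      Real.sqrt_sq hσ.le]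
  rw [hsq]
  have hl1 : Real.sqrt (∑ t, w t ^ 2) ≤ ∑ t, |u₁ t - u₂ t| * |g t| := by
    refine (ff_l2_le_l1 w).trans ?_
    refine le_of_eq (Finset.sum_congr rfl fun t _ => ?_)
    rw [hw]; rw [abs_mul]; ring
  calc Real.sqrt 2 * (Real.sqrt (∑ t, w t ^ 2) / σ)
      ≤ Real.sqrt 2 * ((∑ t, |u₁ t - u₂ t| * |g t|) / σ) := by gcongr
    _ = Real.sqrt 2 / σ * ∑ t, |u₁ t - u₂ t| * |g t| := by ring

end aux

/-- Minimum-distance lemma for the fast-fading converse: for all large `n`,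
two codewords of power at most `nA` that can be distinguished by a
decoding-region family with error sum less than `1` must be at Euclidean
distance at least `√(n·ε_n) = √A·n^{-(1+2b)/2}`, where `ε_n = A·n^{-2(1+b)}`. -/
theorem fastFading_minimum_distance
    (A σ : ℝ) (hA : 0 < A) (hσ : 0 < σ)
    (ν : Measure ℝ) [IsProbabilityMeasure ν]
    (hm : Integrable (fun g : ℝ => g ^ 2) ν)
    (lam₁ lam₂ b : ℝ) (hlam₁ : 0 ≤ lam₁) (hlam₂ : 0 ≤ lam₂)
    (hlam : lam₁ + lam₂ < 1) (hb : 0 < b) :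
    ∃ n₀ : ℕ, ∀ n ≥ n₀, ∀ u₁ u₂ : Fin n → ℝ,
      (∑ t, u₁ t ^ 2 ≤ (n : ℝ) * A) → (∑ t, u₂ t ^ 2 ≤ (n : ℝ) * A) →
      ∀ D : (Fin n → ℝ) → Set (Fin n → ℝ),
        MeasurableSet {p : (Fin n → ℝ) × (Fin n → ℝ) | p.2 ∈ D p.1} →
        1 - lam₁ ≤ accProb n σ ν u₁ D →
        accProb n σ ν u₂ D ≤ lam₂ →
        Real.sqrt A * (n : ℝ) ^ (-(1 + 2 * b) / 2) ≤
          Real.sqrt (∑ t, (u₁ t - u₂ t) ^ 2) := by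
  -- integrability of |x| under ν
  have habs : Integrable (fun x : ℝ => |x|) ν := by
    refine (Integrable.mono ((integrable_const 1).add hm)
      continuous_abs.measurable.aestronglyMeasurable ?_)
    refine Filter.Eventually.of_forall fun x => ?_
    rw [Real.norm_eq_abs, abs_abs, Real.norm_eq_abs]
    have hx : |x| ≤ 1 + x ^ 2 := by nlinarith [sq_abs x, abs_nonneg x, sq_nonneg (|x| - 1)]
    calc |x| ≤ 1 + x ^ 2 := hx
      _ ≤ |1 + x ^ 2| := le_abs_self _
  set K := ∫ x, |x| ∂ν with hKdef
  have hK0 : 0 ≤ K := integral_nonneg fun x => abs_nonneg _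
  set δ := 1 - lam₁ - lam₂ with hδdef
  have hδ0 : 0 < δ := by rw [hδdef]; linarith
  set C := Real.sqrt 2 / σ * K * Real.sqrt A with hCdef
  have hC0 : 0 ≤ C := by
    rw [hCdef]
    have := Real.sqrt_nonneg (2:ℝ)
    have := Real.sqrt_nonneg A
    positivity
  -- choose n₀
  have htend : Filter.Tendsto (fun n : ℕ => C * (n : ℝ) ^ (-b))
      Filter.atTop (nhds 0) := by
    have h1 : Filter.Tendsto (fun x : ℝ => x ^ (-b)) Filter.atTop (nhds 0) :=
      tendsto_rpow_neg_atTop hb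
    have h2 := h1.comp tendsto_natCast_atTop_atTop (α := ℕ)
    simpa using h2.const_mul C
  have hev : ∀ᶠ n : ℕ in Filter.atTop, C * (n : ℝ) ^ (-b) < δ :=
    htend.eventually_lt_const hδ0
  obtain ⟨n₁, hn₁⟩ := Filter.eventually_atTop.mp hev
  refine ⟨max n₁ 1, fun n hn u₁ u₂ hu₁ hu₂ D hE hacc1 hacc2 => ?_⟩
  have hn1 : 1 ≤ n := le_trans (le_max_right _ _) hn
  have hnb : C * (n : ℝ) ^ (-b) < δ := hn₁ n (le_trans (le_max_left _ _) hn)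
  by_contra hcon
  push_neg at hcon
  set d : Fin n → ℝ := fun t => u₁ t - u₂ t with hd
  haveI : IsProbabilityMeasure (gaussPi n σ) := by unfold gaussPi; infer_instance
  -- measurability and integrability of the acceptance probabilities
  have hqm : ∀ u : Fin n → ℝ, Measurable (fun g : Fin n → ℝ =>
      gaussPi n σ {z : Fin n → ℝ | (fun t => g t * u t + z t) ∈ D g}) := by
    intro u
    have hF : Measurable fun p : (Fin n → ℝ) × (Fin n → ℝ) =>
        ((p.1, fun t => p.1 t * u t + p.2 t) : (Fin n → ℝ) × (Fin n → ℝ)) := by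
      refine measurable_fst.prodMk (measurable_pi_lambda _ fun t => ?_)
      have m1 : Measurable fun p : (Fin n → ℝ) × (Fin n → ℝ) => p.1 t * u t :=
        (measurable_mul_const (u t)).comp ((measurable_pi_apply t).comp measurable_fst)
      have m2 : Measurable fun p : (Fin n → ℝ) × (Fin n → ℝ) => p.2 t :=
        (measurable_pi_apply t).comp measurable_snd
      exact m1.add m2
    have hpre := hE.preimage hF
    exact measurable_measure_prodMk_left (ν := gaussPi n σ) hpre
  have hqint : ∀ u : Fin n → ℝ, Integrable (fun g : Fin n → ℝ =>
      (gaussPi n σ {z : Fin n → ℝ | (fun t => g t * u t + z t) ∈ D g}).toReal)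
      (Measure.pi fun _ : Fin n => ν) := by
    intro u
    refine ⟨((hqm u).ennreal_toReal).aestronglyMeasurable, ?_⟩
    refine HasFiniteIntegral.of_bounded (C := 1) ?_
    refine Filter.Eventually.of_forall fun g => ?_
    rw [Real.norm_eq_abs, abs_of_nonneg ENNReal.toReal_nonneg]
    simpa using ENNReal.toReal_mono (by simp) (prob_le_one)
  -- pointwise bound
  have hpt : ∀ g : Fin n → ℝ,
      |(gaussPi n σ {z : Fin n → ℝ | (fun t => g t * u₁ t + z t) ∈ D g}).toReal
        - (gaussPi n σ {z : Fin n → ℝ | (fun t => g t * u₂ t + z t) ∈ D g}).toReal|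
      ≤ Real.sqrt 2 / σ * ∑ t, |d t| * |g t| :=
    fun g => ff_pointwise σ hσ u₁ u₂ D hE g
  -- integrability of the bound and its integral
  have heval : ∀ t : Fin n, Integrable (fun g : Fin n → ℝ => |g t|)
      (Measure.pi fun _ : Fin n => ν) := by
    intro t
    have h := ff_integrable_prod ν (fun i x => if i = t then |x| else 1)
      (fun i => by
        by_cases hi : i = t
        · simpa [hi] using habs
        · simpa [hi] using (integrable_const (1:ℝ) (μ := ν)))
    refine h.congr (Filter.Eventually.of_forall fun z => ?_)
    simp [Finset.prod_ite_eq' Finset.univ t (fun i => |z i|)]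
  have hevalval : ∀ t : Fin n,
      ∫ g : Fin n → ℝ, |g t| ∂(Measure.pi fun _ : Fin n => ν) = K := by
    intro t
    have h1 : (fun g : Fin n → ℝ => |g t|)
        = fun g : Fin n → ℝ => ∏ i, (if i = t then |g i| else 1) := by
      funext z
      simp [Finset.prod_ite_eq' Finset.univ t (fun i => |z i|)]
    rw [h1, ff_integral_prod ν (fun i x => if i = t then |x| else 1)]
    rw [show (∏ i : Fin n, ∫ x : ℝ, (if i = t then |x| else 1) ∂ν)
        = ∏ i : Fin n, (if i = t then K else 1) from
      Finset.prod_congr rfl fun i _ => by by_cases hi : i = t <;> simp [hi, hKdef]]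
    simp [Finset.prod_ite_eq' Finset.univ t (fun _ => K)]
  -- integrate the pointwise bound
  have hBint : Integrable (fun g : Fin n → ℝ =>
      Real.sqrt 2 / σ * ∑ t, |d t| * |g t|) (Measure.pi fun _ : Fin n => ν) := by
    refine Integrable.const_mul ?_ _
    exact integrable_finset_sum _ fun t _ => (heval t).const_mul _
  have hchain : δ ≤ Real.sqrt 2 / σ * K * ∑ t, |d t| := by
    have e0 : accProb n σ ν u₁ D - accProb n σ ν u₂ D
        = ∫ g, ((gaussPi n σ {z : Fin n → ℝ | (fun t => g t * u₁ t + z t) ∈ D g}).toReal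
            - (gaussPi n σ {z : Fin n → ℝ | (fun t => g t * u₂ t + z t) ∈ D g}).toReal)
          ∂(Measure.pi fun _ : Fin n => ν) :=
      (integral_sub (hqint u₁) (hqint u₂)).symm
    have e2 : ∫ g, ((gaussPi n σ {z : Fin n → ℝ | (fun t => g t * u₁ t + z t) ∈ D g}).toReal
            - (gaussPi n σ {z : Fin n → ℝ | (fun t => g t * u₂ t + z t) ∈ D g}).toReal)
          ∂(Measure.pi fun _ : Fin n => ν)
        ≤ ∫ g, Real.sqrt 2 / σ * ∑ t, |d t| * |g t| ∂(Measure.pi fun _ : Fin n => ν) := by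
      refine integral_mono ((hqint u₁).sub (hqint u₂)) hBint fun g => ?_
      exact (le_abs_self _).trans (hpt g)
    have e3 : ∫ g, Real.sqrt 2 / σ * ∑ t, |d t| * |g t| ∂(Measure.pi fun _ : Fin n => ν)
        = Real.sqrt 2 / σ * K * ∑ t, |d t| := by
      rw [integral_const_mul, integral_finset_sum _ fun t _ => (heval t).const_mul _]
      have : ∀ t : Fin n, ∫ g : Fin n → ℝ, |d t| * |g t| ∂(Measure.pi fun _ : Fin n => ν)
          = |d t| * K := fun t => by rw [integral_const_mul, hevalval t]
      rw [Finset.sum_congr rfl fun t _ => this t, ← Finset.sum_mul]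
      ring
    have : δ ≤ accProb n σ ν u₁ D - accProb n σ ν u₂ D := by
      rw [hδdef]; linarith
    calc δ ≤ accProb n σ ν u₁ D - accProb n σ ν u₂ D := this
      _ ≤ Real.sqrt 2 / σ * K * ∑ t, |d t| := by
        rw [e0]; exact e2.trans (le_of_eq e3)
  -- final arithmetic contradiction
  have hl1l2 : ∑ t, |d t| ≤ Real.sqrt n * Real.sqrt (∑ t, d t ^ 2) := ff_l1_le_l2 d
  have hn0 : (0:ℝ) < n := by exact_mod_cast Nat.lt_of_lt_of_le Nat.zero_lt_one hn1
  have hrpow : Real.sqrt n * (n : ℝ) ^ (-(1 + 2 * b) / 2) = (n : ℝ) ^ (-b) := by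
    rw [Real.sqrt_eq_rpow, ← Real.rpow_add hn0]
    congr 1
    ring
  have hdlt : Real.sqrt (∑ t, d t ^ 2) < Real.sqrt A * (n : ℝ) ^ (-(1 + 2 * b) / 2) := hcon
  have hfin : Real.sqrt 2 / σ * K * ∑ t, |d t| < δ := by
    have c0 : 0 ≤ Real.sqrt 2 / σ * K := by positivity
    have step1 : Real.sqrt 2 / σ * K * ∑ t, |d t|
        ≤ Real.sqrt 2 / σ * K * (Real.sqrt n * Real.sqrt (∑ t, d t ^ 2)) :=
      mul_le_mul_of_nonneg_left hl1l2 c0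
    have step2 : Real.sqrt 2 / σ * K * (Real.sqrt n * Real.sqrt (∑ t, d t ^ 2))
        ≤ Real.sqrt 2 / σ * K * (Real.sqrt n * (Real.sqrt A * (n : ℝ) ^ (-(1 + 2 * b) / 2))) := by
      have := mul_le_mul_of_nonneg_left hdlt.le (Real.sqrt_nonneg (n:ℝ))
      exact mul_le_mul_of_nonneg_left this c0
    have step3 : Real.sqrt 2 / σ * K * (Real.sqrt n * (Real.sqrt A * (n : ℝ) ^ (-(1 + 2 * b) / 2)))
        = C * (n : ℝ) ^ (-b) := by
      rw [hCdef, ← hrpow]; ring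
    calc Real.sqrt 2 / σ * K * ∑ t, |d t|
        ≤ _ := step1
      _ ≤ _ := step2
      _ = C * (n : ℝ) ^ (-b) := step3
      _ < δ := hnb
  exact absurd hchain (not_le.mpr hfin)
end

section
/- (Minimum-distance lemma for the slow-fading converse.) Fix A > 0, σ > 0, Γ > 0, a nonempty set 𝒢 ⊆ [−Γ, Γ], reals λ₁, λ₂ ≥ 0 with λ₁ + λ₂ < 1, and b > 0. Then there exists n₀ such that for all n ≥ n₀ the following holds: if u₁, u₂ ∈ ℝⁿ satisfy ‖u₁‖² ≤ nA and ‖u₂‖² ≤ nA, and there is a decoding-region family D (sets D_g ⊆ ℝⁿ indexed by g ∈ ℝ with {(g,y) : y ∈ D_g} measurable) such that for every g ∈ 𝒢 one has P_g(u₁, D) ≥ 1 − λ₁ and P_g(u₂, D) ≤ λ₂, then ‖u₁ − u₂‖ ≥ √(n·ε_n) = √A·n^{-(1+2b)/2}, where ε_n = A·n^{-2(1+b)}. -/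
open MeasureTheory ProbabilityTheory
open scoped NNReal ENNReal

/-- Acceptance probability of a codeword `u` at the fading gain `g` for the
decoding-region family `D` over the slow-fading Gaussian channel:
`P_g(u,D) = P_Z(g·u + Z ∈ D_g)`. -/
noncomputable def accProbSlow (n : ℕ) (σ : ℝ) (g : ℝ)
    (u : Fin n → ℝ) (D : ℝ → Set (Fin n → ℝ)) : ℝ :=
  (gaussPi n σ {z : Fin n → ℝ | (fun t => g * u t + z t) ∈ D g}).toReal

noncomputable def Vs (σ : ℝ) : ℝ≥0 := ⟨σ ^ 2, sq_nonneg σ⟩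
noncomputable def Cs (σ : ℝ) : ℝ := (Real.sqrt (2 * Real.pi * σ ^ 2))⁻¹

lemma Vs_coe (σ : ℝ) : ((Vs σ : ℝ≥0) : ℝ) = σ ^ 2 := rfl

lemma Vs_ne_zero {σ : ℝ} (hσ : σ ≠ 0) : Vs σ ≠ 0 := fun h =>
  (pow_ne_zero 2 hσ) (by have h' := congrArg NNReal.toReal h; rw [Vs_coe, NNReal.coe_zero] at h'; exact h')

lemma Cs_pos {σ : ℝ} (hσ : σ ≠ 0) : 0 < Cs σ := by
  have h : 0 < σ ^ 2 := by positivity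
  have h2 : 0 < 2 * Real.pi * σ ^ 2 := by positivity
  simp only [Cs]
  positivity

lemma Cs_nonneg (σ : ℝ) : 0 ≤ Cs σ := by simp only [Cs]; positivity

lemma gaussPDF_le (σ m x : ℝ) : gaussianPDFReal m (Vs σ) x ≤ Cs σ := by
  rw [gaussianPDFReal, Cs]
  have h1 : ((Vs σ : ℝ≥0) : ℝ) = σ ^ 2 := rfl
  rw [h1]
  have h2 : Real.exp (-(x - m) ^ 2 / (2 * σ ^ 2)) ≤ 1 := by
    rw [Real.exp_le_one_iff]
    apply div_nonpos_of_nonpos_of_nonneg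
    · simp [sq_nonneg]
    · positivity
  calc (Real.sqrt (2 * Real.pi * σ ^ 2))⁻¹ * Real.exp (-(x - m) ^ 2 / (2 * σ ^ 2))
      ≤ (Real.sqrt (2 * Real.pi * σ ^ 2))⁻¹ * 1 := by
        apply mul_le_mul_of_nonneg_left h2; positivity
    _ = (Real.sqrt (2 * Real.pi * σ ^ 2))⁻¹ := mul_one _

lemma gauss_set_le {σ : ℝ} (hσ : σ ≠ 0) (m : ℝ) {S : Set ℝ} (hS : MeasurableSet S)
    {r : ℝ} (hr0 : 0 ≤ r) (hr : volume S ≤ ENNReal.ofReal r) :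
    ((gaussianReal m (Vs σ)) S).toReal ≤ Cs σ * r := by
  have hfin : volume S < ⊤ := lt_of_le_of_lt hr ENNReal.ofReal_lt_top
  rw [gaussianReal_apply_eq_integral m (Vs_ne_zero hσ) S,
    ENNReal.toReal_ofReal (setIntegral_nonneg hS fun x _ => gaussianPDFReal_nonneg _ _ _)]
  calc ∫ x in S, gaussianPDFReal m (Vs σ) x
      ≤ ∫ _x in S, Cs σ := by
        apply setIntegral_mono_on (integrable_gaussianPDFReal _ _).integrableOn
          (integrableOn_const hfin.ne) hS
        exact fun x _ => gaussPDF_le σ m x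
    _ = (volume S).toReal * Cs σ := by rw [setIntegral_const, smul_eq_mul]; rfl
    _ ≤ r * Cs σ := by
        apply mul_le_mul_of_nonneg_right _ (Cs_nonneg σ)
        exact ENNReal.toReal_le_of_le_ofReal hr0 hr
    _ = Cs σ * r := mul_comm _ _

lemma gauss_integral_eq {σ : ℝ} (hσ : σ ≠ 0) (m : ℝ) (f : ℝ → ℝ) (hf : Measurable f) :
    ∫ x, f x ∂(gaussianReal m (Vs σ)) = ∫ x, gaussianPDFReal m (Vs σ) x * f x := by
  rw [gaussianReal_of_var_ne_zero _ (Vs_ne_zero hσ)]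
  have h : gaussianPDF m (Vs σ)
      = fun x => ((Real.toNNReal (gaussianPDFReal m (Vs σ) x) : ℝ≥0) : ℝ≥0∞) := rfl
  rw [h, integral_withDensity_eq_integral_smul
    ((measurable_gaussianPDFReal m (Vs σ)).real_toNNReal) f]
  congr 1
  ext x
  rw [NNReal.smul_def, smul_eq_mul, Real.coe_toNNReal _ (gaussianPDFReal_nonneg _ _ _)]

/-- key halfline computation -/
lemma gauss_H_le {σ : ℝ} (hσ : σ ≠ 0) (m₁ m₂ : ℝ) :
    ((gaussianReal m₁ (Vs σ))
        {x | gaussianPDFReal m₂ (Vs σ) x ≤ gaussianPDFReal m₁ (Vs σ) x}).toReal -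
      ((gaussianReal m₂ (Vs σ))
        {x | gaussianPDFReal m₂ (Vs σ) x ≤ gaussianPDFReal m₁ (Vs σ) x}).toReal
      ≤ Cs σ * |m₁ - m₂| := by
  have hV : (0:ℝ) < σ ^ 2 := by positivity
  have hc : (0:ℝ) < (Real.sqrt (2 * Real.pi * ((Vs σ : ℝ≥0) : ℝ)))⁻¹ := by
    have : ((Vs σ : ℝ≥0) : ℝ) = σ ^ 2 := rfl
    rw [this]
    have : (0:ℝ) < 2 * Real.pi * σ ^ 2 := by positivity
    positivity
  -- identify H
  have hHiff : ∀ x, (gaussianPDFReal m₂ (Vs σ) x ≤ gaussianPDFReal m₁ (Vs σ) x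
      ↔ (x - m₁) ^ 2 ≤ (x - m₂) ^ 2) := by
    intro x
    rw [gaussianPDFReal, gaussianPDFReal, mul_le_mul_iff_right₀ hc, Real.exp_le_exp,
      div_le_div_iff_of_pos_right (by have : ((Vs σ : ℝ≥0):ℝ) = σ ^ 2 := rfl; rw [this]; positivity),
      neg_le_neg_iff]
  rcases lt_trichotomy m₁ m₂ with hlt | heq | hgt
  · -- H = Iic c
    set c := (m₁ + m₂) / 2 with hc_def
    have hH : {x | gaussianPDFReal m₂ (Vs σ) x ≤ gaussianPDFReal m₁ (Vs σ) x} = Set.Iic c := by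
      ext x
      rw [Set.mem_setOf_eq, hHiff x, Set.mem_Iic]
      constructor
      · intro h; nlinarith
      · intro h; nlinarith
    rw [hH]
    have hmap : (gaussianReal m₁ (Vs σ)) (Set.Iic c)
        = (gaussianReal m₂ (Vs σ)) (Set.Iic (c - (m₁ - m₂))) := by
      have h1 : gaussianReal m₁ (Vs σ) = (gaussianReal m₂ (Vs σ)).map (· + (m₁ - m₂)) := by
        rw [gaussianReal_map_add_const]; ring_nf
      rw [h1, Measure.map_apply (measurable_add_const _) measurableSet_Iic]
      congr 1
      ext x
      simp only [Set.mem_preimage, Set.mem_Iic]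
      constructor <;> intro <;> linarith
    rw [hmap]
    have hsplit : Set.Iic (c - (m₁ - m₂)) = Set.Iic c ∪ Set.Ioc c (c - (m₁ - m₂)) := by
      rw [Set.Iic_union_Ioc_eq_Iic (by linarith)]
    have hdisj : Disjoint (Set.Iic c) (Set.Ioc c (c - (m₁ - m₂))) := by
      rw [Set.disjoint_left]
      rintro x hx ⟨hx1, _⟩
      exact absurd hx (not_le.2 hx1)
    rw [hsplit, measure_union hdisj measurableSet_Ioc,
      ENNReal.toReal_add (measure_ne_top _ _) (measure_ne_top _ _)]
    have hIoc : ((gaussianReal m₂ (Vs σ)) (Set.Ioc c (c - (m₁ - m₂)))).toReal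
        ≤ Cs σ * (m₂ - m₁) := by
      apply gauss_set_le hσ m₂ measurableSet_Ioc (by linarith)
      rw [Real.volume_Ioc]
      apply ENNReal.ofReal_le_ofReal
      linarith
    have habs : |m₁ - m₂| = m₂ - m₁ := by rw [abs_of_neg (by linarith)]; ring
    rw [habs]
    linarith
  · subst heq
    simp [abs_zero, sub_self, mul_zero, le_refl]
  · -- H = Ici c
    set c := (m₁ + m₂) / 2 with hc_def
    have hH : {x | gaussianPDFReal m₂ (Vs σ) x ≤ gaussianPDFReal m₁ (Vs σ) x} = Set.Ici c := by
      ext x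
      rw [Set.mem_setOf_eq, hHiff x, Set.mem_Ici]
      constructor
      · intro h; nlinarith
      · intro h; nlinarith
    rw [hH]
    have hmap : (gaussianReal m₁ (Vs σ)) (Set.Ici c)
        = (gaussianReal m₂ (Vs σ)) (Set.Ici (c - (m₁ - m₂))) := by
      have h1 : gaussianReal m₁ (Vs σ) = (gaussianReal m₂ (Vs σ)).map (· + (m₁ - m₂)) := by
        rw [gaussianReal_map_add_const]; ring_nf
      rw [h1, Measure.map_apply (measurable_add_const _) measurableSet_Ici]
      congr 1
      ext x
      simp only [Set.mem_preimage, Set.mem_Ici]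
      constructor <;> intro <;> linarith
    rw [hmap]
    have hsplit : Set.Ici (c - (m₁ - m₂)) = Set.Ico (c - (m₁ - m₂)) c ∪ Set.Ici c := by
      rw [Set.Ico_union_Ici_eq_Ici (by linarith)]
    have hdisj : Disjoint (Set.Ico (c - (m₁ - m₂)) c) (Set.Ici c) := by
      rw [Set.disjoint_left]
      rintro x ⟨_, hx2⟩ hx
      exact absurd hx (not_le.2 hx2)
    rw [hsplit, measure_union hdisj measurableSet_Ici,
      ENNReal.toReal_add (measure_ne_top _ _) (measure_ne_top _ _)]
    have hIco : ((gaussianReal m₂ (Vs σ)) (Set.Ico (c - (m₁ - m₂)) c)).toReal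
        ≤ Cs σ * (m₁ - m₂) := by
      apply gauss_set_le hσ m₂ measurableSet_Ico (by linarith)
      rw [Real.volume_Ico]
      apply ENNReal.ofReal_le_ofReal
      linarith
    have habs : |m₁ - m₂| = m₁ - m₂ := abs_of_pos (by linarith)
    rw [habs]
    linarith

lemma gauss_tv {σ : ℝ} (hσ : σ ≠ 0) (m₁ m₂ : ℝ) (f : ℝ → ℝ) (hf : Measurable f)
    (h0 : ∀ x, 0 ≤ f x) (h1 : ∀ x, f x ≤ 1) :
    ∫ x, f x ∂(gaussianReal m₁ (Vs σ)) - ∫ x, f x ∂(gaussianReal m₂ (Vs σ))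
      ≤ Cs σ * |m₁ - m₂| := by
  set p₁ := gaussianPDFReal m₁ (Vs σ) with hp₁
  set p₂ := gaussianPDFReal m₂ (Vs σ) with hp₂
  set H := {x | p₂ x ≤ p₁ x} with hH_def
  have hH : MeasurableSet H :=
    measurableSet_le (measurable_gaussianPDFReal _ _) (measurable_gaussianPDFReal _ _)
  have hbd : ∃ C, ∀ x, ‖f x‖ ≤ C :=
    ⟨1, fun x => by rw [Real.norm_eq_abs, abs_of_nonneg (h0 x)]; exact h1 x⟩
  have hint : ∀ m : ℝ, Integrable (fun x => gaussianPDFReal m (Vs σ) x * f x) volume := by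
    intro m
    have := (integrable_gaussianPDFReal m (Vs σ)).bdd_mul hf.aestronglyMeasurable (ae_of_all _ hbd.choose_spec)
    simpa [mul_comm] using this
  have hsub : Integrable (fun x => p₁ x - p₂ x) volume :=
    (integrable_gaussianPDFReal m₁ (Vs σ)).sub (integrable_gaussianPDFReal m₂ (Vs σ))
  have hind : Integrable (H.indicator fun x => p₁ x - p₂ x) volume := hsub.indicator hH
  rw [gauss_integral_eq hσ m₁ f hf, gauss_integral_eq hσ m₂ f hf, ← integral_sub (hint m₁) (hint m₂)]
  have hpt : ∀ x, p₁ x * f x - p₂ x * f x ≤ H.indicator (fun x => p₁ x - p₂ x) x := by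
    intro x
    by_cases hx : x ∈ H
    · rw [Set.indicator_of_mem hx]
      have hx' : p₂ x ≤ p₁ x := hx
      nlinarith [h0 x, h1 x]
    · rw [Set.indicator_of_notMem hx]
      have hx' : p₁ x < p₂ x := not_le.1 hx
      nlinarith [h0 x, h1 x]
  calc ∫ x, (p₁ x * f x - p₂ x * f x)
      ≤ ∫ x, H.indicator (fun x => p₁ x - p₂ x) x :=
        integral_mono ((hint m₁).sub (hint m₂)) hind hpt
    _ = ∫ x in H, (p₁ x - p₂ x) := integral_indicator hH
    _ = (∫ x in H, p₁ x) - ∫ x in H, p₂ x :=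
        integral_sub (integrable_gaussianPDFReal m₁ (Vs σ)).integrableOn
          (integrable_gaussianPDFReal m₂ (Vs σ)).integrableOn
    _ = ((gaussianReal m₁ (Vs σ)) H).toReal - ((gaussianReal m₂ (Vs σ)) H).toReal := by
        rw [gaussianReal_apply_eq_integral m₁ (Vs_ne_zero hσ) H,
          gaussianReal_apply_eq_integral m₂ (Vs_ne_zero hσ) H,
          ENNReal.toReal_ofReal (setIntegral_nonneg hH fun x _ => gaussianPDFReal_nonneg _ _ _),
          ENNReal.toReal_ofReal (setIntegral_nonneg hH fun x _ => gaussianPDFReal_nonneg _ _ _)]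
    _ ≤ Cs σ * |m₁ - m₂| := gauss_H_le hσ m₁ m₂

lemma integrable_of_bdd {α : Type*} [MeasurableSpace α] {μ : Measure α} [IsProbabilityMeasure μ]
    {f : α → ℝ} (hf : Measurable f) (h0 : ∀ x, 0 ≤ f x) (h1 : ∀ x, f x ≤ 1) :
    Integrable f μ := by
  refine (integrable_const (1:ℝ)).mono' hf.aestronglyMeasurable (ae_of_all _ fun x => ?_)
  rw [Real.norm_eq_abs, abs_of_nonneg (h0 x)]
  exact h1 x

lemma gaussPi_tv {σ : ℝ} (hσ : σ ≠ 0) : ∀ (n : ℕ) (v w : Fin n → ℝ)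
    (f : (Fin n → ℝ) → ℝ), Measurable f → (∀ z, 0 ≤ f z) → (∀ z, f z ≤ 1) →
    ∫ z, f z ∂(Measure.pi fun i => gaussianReal (v i) (Vs σ)) -
      ∫ z, f z ∂(Measure.pi fun i => gaussianReal (w i) (Vs σ))
      ≤ Cs σ * ∑ i, |v i - w i| := by
  intro n
  induction n with
  | zero =>
    intro v w f _ _ _
    have hvw : v = w := Subsingleton.elim v w
    subst hvw
    simp
  | succ n ih =>
    intro v w f hf h0 h1
    set e := MeasurableEquiv.piFinSuccAbove (fun _ : Fin (n + 1) => ℝ) 0 with he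
    have hmpv := measurePreserving_piFinSuccAbove (fun i => gaussianReal (v i) (Vs σ)) 0
    have hmpw := measurePreserving_piFinSuccAbove (fun i => gaussianReal (w i) (Vs σ)) 0
    set τv := Measure.pi fun j : Fin n => gaussianReal (v ((0 : Fin (n+1)).succAbove j)) (Vs σ)
      with hτv
    set τw := Measure.pi fun j : Fin n => gaussianReal (w ((0 : Fin (n+1)).succAbove j)) (Vs σ)
      with hτw
    set κv := gaussianReal (v 0) (Vs σ) with hκv
    set κw := gaussianReal (w 0) (Vs σ) with hκw
    have hg : Measurable (fun p : ℝ × (Fin n → ℝ) => f (e.symm p)) :=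
      hf.comp e.symm.measurable
    -- integral over pi = iterated integral
    have hrw : ∀ (m : Fin (n+1) → ℝ),
        ∫ z, f z ∂(Measure.pi fun i => gaussianReal (m i) (Vs σ)) =
        ∫ x, ∫ y, f (e.symm (x, y))
          ∂(Measure.pi fun j : Fin n => gaussianReal (m ((0 : Fin (n+1)).succAbove j)) (Vs σ))
          ∂(gaussianReal (m 0) (Vs σ)) := by
      intro m
      have hmp := measurePreserving_piFinSuccAbove (fun i => gaussianReal (m i) (Vs σ)) 0
      have h1' := hmp.integral_comp' (f := e) (fun p => f (e.symm p))
      simp only [MeasurableEquiv.symm_apply_apply] at h1'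
      rw [h1']
      exact integral_prod _ (integrable_of_bdd hg (fun p => h0 _) (fun p => h1 _))
    rw [hrw v, hrw w]
    set Fv : ℝ → ℝ := fun x => ∫ y, f (e.symm (x, y)) ∂τv with hFv
    set Fw : ℝ → ℝ := fun x => ∫ y, f (e.symm (x, y)) ∂τw with hFw
    have hFv_meas : Measurable Fv :=
      hg.stronglyMeasurable.integral_prod_right'.measurable
    have hFw_meas : Measurable Fw :=
      hg.stronglyMeasurable.integral_prod_right'.measurable
    have hsect : ∀ x : ℝ, Measurable fun y : Fin n → ℝ => f (e.symm (x, y)) := fun x =>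
      hg.comp measurable_prodMk_left
    have hFv0 : ∀ x, 0 ≤ Fv x := fun x => integral_nonneg fun y => h0 _
    have hFw0 : ∀ x, 0 ≤ Fw x := fun x => integral_nonneg fun y => h0 _
    have hFv1 : ∀ x, Fv x ≤ 1 := by
      intro x
      calc Fv x ≤ ∫ _y, (1:ℝ) ∂τv :=
            integral_mono (integrable_of_bdd (hsect x) (fun y => h0 _) (fun y => h1 _))
              (integrable_const 1) (fun y => h1 _)
        _ = 1 := by simp
    have hFw1 : ∀ x, Fw x ≤ 1 := by
      intro x
      calc Fw x ≤ ∫ _y, (1:ℝ) ∂τw :=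
            integral_mono (integrable_of_bdd (hsect x) (fun y => h0 _) (fun y => h1 _))
              (integrable_const 1) (fun y => h1 _)
        _ = 1 := by simp
    -- pointwise IH
    have hIH : ∀ x, Fv x - Fw x ≤ Cs σ * ∑ j : Fin n,
        |v ((0 : Fin (n+1)).succAbove j) - w ((0 : Fin (n+1)).succAbove j)| := by
      intro x
      exact ih (fun j => v ((0 : Fin (n+1)).succAbove j))
        (fun j => w ((0 : Fin (n+1)).succAbove j))
        (fun y => f (e.symm (x, y))) (hsect x) (fun y => h0 _) (fun y => h1 _)
    have hterm1 : ∫ x, Fv x ∂κv - ∫ x, Fw x ∂κv ≤ Cs σ * ∑ j : Fin n,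
        |v ((0 : Fin (n+1)).succAbove j) - w ((0 : Fin (n+1)).succAbove j)| := by
      rw [← integral_sub (integrable_of_bdd hFv_meas hFv0 hFv1)
        (integrable_of_bdd hFw_meas hFw0 hFw1)]
      calc ∫ x, (Fv x - Fw x) ∂κv
          ≤ ∫ _x, (Cs σ * ∑ j : Fin n,
              |v ((0 : Fin (n+1)).succAbove j) - w ((0 : Fin (n+1)).succAbove j)|) ∂κv :=
            integral_mono ((integrable_of_bdd hFv_meas hFv0 hFv1).sub
              (integrable_of_bdd hFw_meas hFw0 hFw1)) (integrable_const _) hIH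
        _ = _ := by simp
    have hterm2 : ∫ x, Fw x ∂κv - ∫ x, Fw x ∂κw ≤ Cs σ * |v 0 - w 0| :=
      gauss_tv hσ (v 0) (w 0) Fw hFw_meas hFw0 hFw1
    have hsum : ∑ i : Fin (n+1), |v i - w i| = |v 0 - w 0| + ∑ j : Fin n,
        |v ((0 : Fin (n+1)).succAbove j) - w ((0 : Fin (n+1)).succAbove j)| := by
      rw [Fin.sum_univ_succ]
      simp [Fin.succAbove_zero]
    rw [hsum, mul_add]
    linarith

lemma gaussPi_tv_set {σ : ℝ} (hσ : σ ≠ 0) (n : ℕ) (v w : Fin n → ℝ)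
    {S : Set (Fin n → ℝ)} (hS : MeasurableSet S) :
    ((Measure.pi fun i => gaussianReal (v i) (Vs σ)) S).toReal -
      ((Measure.pi fun i => gaussianReal (w i) (Vs σ)) S).toReal
      ≤ Cs σ * ∑ i, |v i - w i| := by
  have h0 : ∀ z, 0 ≤ S.indicator (1 : (Fin n → ℝ) → ℝ) z := fun z =>
    Set.indicator_nonneg (fun _ _ => zero_le_one) z
  have h1 : ∀ z, S.indicator (1 : (Fin n → ℝ) → ℝ) z ≤ 1 := fun z => by
    by_cases hz : z ∈ S <;> simp [hz]
  have := gaussPi_tv hσ n v w (S.indicator (1 : (Fin n → ℝ) → ℝ))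
    (measurable_const.indicator hS) h0 h1
  rwa [integral_indicator_one hS, integral_indicator_one hS] at this

lemma accProbSlow_eq (n : ℕ) (σ g : ℝ) (u : Fin n → ℝ) (D : ℝ → Set (Fin n → ℝ))
    (hDg : MeasurableSet (D g)) :
    accProbSlow n σ g u D
      = ((Measure.pi fun i => gaussianReal (g * u i) (Vs σ)) (D g)).toReal := by
  have hmp : MeasurePreserving (fun z : Fin n → ℝ => fun t => g * u t + z t)
      (gaussPi n σ) (Measure.pi fun i => gaussianReal (g * u i) (Vs σ)) := by
    apply measurePreserving_pi
    intro i
    refine ⟨measurable_const_add _, ?_⟩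
    have := gaussianReal_map_const_add (μ := 0) (v := Vs σ) (g * u i)
    rwa [zero_add] at this
  rw [accProbSlow]
  have hset : {z : Fin n → ℝ | (fun t => g * u t + z t) ∈ D g}
      = (fun z : Fin n → ℝ => fun t => g * u t + z t) ⁻¹' (D g) := rfl
  rw [hset, ← Measure.map_apply hmp.measurable hDg, hmp.map_eq]

/-- Minimum-distance lemma for the slow-fading converse: for all large `n`,
two codewords of power at most `nA` that can be distinguished, uniformly over
all gains `g ∈ 𝒢 ⊆ [−Γ,Γ]`, by a decoding-region family with error sum less
than `1` must be at Euclidean distance at least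
`√(n·ε_n) = √A·n^{-(1+2b)/2}`, where `ε_n = A·n^{-2(1+b)}`. -/
theorem slowFading_minimum_distance
    (A σ Γ : ℝ) (hA : 0 < A) (hσ : 0 < σ) (hΓ : 0 < Γ)
    (𝒢 : Set ℝ) (h𝒢ne : 𝒢.Nonempty) (h𝒢 : 𝒢 ⊆ Set.Icc (-Γ) Γ)
    (lam₁ lam₂ b : ℝ) (hlam₁ : 0 ≤ lam₁) (hlam₂ : 0 ≤ lam₂)
    (hlam : lam₁ + lam₂ < 1) (hb : 0 < b) :
    ∃ n₀ : ℕ, ∀ n ≥ n₀, ∀ u₁ u₂ : Fin n → ℝ,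
      (∑ t, u₁ t ^ 2 ≤ (n : ℝ) * A) → (∑ t, u₂ t ^ 2 ≤ (n : ℝ) * A) →
      ∀ D : ℝ → Set (Fin n → ℝ),
        MeasurableSet {p : ℝ × (Fin n → ℝ) | p.2 ∈ D p.1} →
        (∀ g ∈ 𝒢, 1 - lam₁ ≤ accProbSlow n σ g u₁ D ∧
          accProbSlow n σ g u₂ D ≤ lam₂) →
        Real.sqrt A * (n : ℝ) ^ (-(1 + 2 * b) / 2) ≤
          Real.sqrt (∑ t, (u₁ t - u₂ t) ^ 2) := by
  have hσ' : σ ≠ 0 := ne_of_gt hσ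
  set δ := 1 - lam₁ - lam₂ with hδ_def
  have hδ : 0 < δ := by simp only [hδ_def]; linarith
  set K := Cs σ * Γ * Real.sqrt A with hK_def
  have hK : 0 < K := by
    have := Cs_pos hσ'
    have hsA : 0 < Real.sqrt A := Real.sqrt_pos.2 hA
    positivity
  have htend : Filter.Tendsto (fun n : ℕ => ((n : ℝ)) ^ (-b)) Filter.atTop (nhds 0) :=
    (tendsto_rpow_neg_atTop hb).comp tendsto_natCast_atTop_atTop
  have hev : ∀ᶠ n : ℕ in Filter.atTop, ((n : ℝ)) ^ (-b) < δ / K :=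
    htend.eventually_lt_const (by positivity)
  obtain ⟨n₀, hn₀⟩ := Filter.eventually_atTop.1 (hev.and (Filter.eventually_ge_atTop 1))
  refine ⟨n₀, fun n hn u₁ u₂ _ _ D hD hacc => ?_⟩
  obtain ⟨hnev, hn1⟩ := hn₀ n hn
  by_contra hcon
  push_neg at hcon
  obtain ⟨g₀, hg₀⟩ := h𝒢ne
  have hgbd : |g₀| ≤ Γ := abs_le.2 ⟨(h𝒢 hg₀).1, (h𝒢 hg₀).2⟩
  have hDg : MeasurableSet (D g₀) := by
    have : D g₀ = (fun y : Fin n → ℝ => (g₀, y)) ⁻¹' {p : ℝ × (Fin n → ℝ) | p.2 ∈ D p.1} := rfl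
    rw [this]
    exact measurable_prodMk_left hD
  have h1 := (hacc g₀ hg₀).1
  have h2 := (hacc g₀ hg₀).2
  rw [accProbSlow_eq n σ g₀ u₁ D hDg] at h1
  rw [accProbSlow_eq n σ g₀ u₂ D hDg] at h2
  have hTV := gaussPi_tv_set hσ' n (fun i => g₀ * u₁ i) (fun i => g₀ * u₂ i) hDg
  set Sd := Real.sqrt (∑ t, (u₁ t - u₂ t) ^ 2) with hSd_def
  have hSd0 : 0 ≤ Sd := Real.sqrt_nonneg _
  have key : δ ≤ Cs σ * ∑ i, |g₀ * u₁ i - g₀ * u₂ i| := by linarith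
  have hsum1 : ∑ i, |g₀ * u₁ i - g₀ * u₂ i| = |g₀| * ∑ i, |u₁ i - u₂ i| := by
    rw [Finset.mul_sum]
    exact Finset.sum_congr rfl fun i _ => by rw [← mul_sub, abs_mul]
  have hnR : (1:ℝ) ≤ (n:ℝ) := by exact_mod_cast hn1
  have hnpos : (0:ℝ) < (n:ℝ) := by linarith
  have hCS : ∑ i, |u₁ i - u₂ i| ≤ Real.sqrt n * Sd := by
    have h2' : (∑ i, |u₁ i - u₂ i|) ^ 2 ≤ (n : ℝ) * ∑ t, (u₁ t - u₂ t) ^ 2 := by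
      have := sq_sum_le_card_mul_sum_sq (s := Finset.univ)
        (f := fun i : Fin n => |u₁ i - u₂ i|)
      simpa [sq_abs, Finset.card_univ] using this
    calc ∑ i, |u₁ i - u₂ i|
        = Real.sqrt ((∑ i, |u₁ i - u₂ i|) ^ 2) := by
          rw [Real.sqrt_sq (Finset.sum_nonneg fun i _ => abs_nonneg _)]
      _ ≤ Real.sqrt ((n:ℝ) * ∑ t, (u₁ t - u₂ t) ^ 2) := Real.sqrt_le_sqrt h2'
      _ = Real.sqrt n * Sd := Real.sqrt_mul (le_of_lt hnpos) _
  have hpow : Real.sqrt n * (n:ℝ) ^ (-(1 + 2 * b) / 2) = (n:ℝ) ^ (-b) := by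
    rw [Real.sqrt_eq_rpow, ← Real.rpow_add hnpos]
    congr 1
    ring
  have hsumd0 : 0 ≤ ∑ i, |u₁ i - u₂ i| := Finset.sum_nonneg fun i _ => abs_nonneg _
  have e1 : δ ≤ Cs σ * (|g₀| * ∑ i, |u₁ i - u₂ i|) := by rw [← hsum1]; exact key
  have e2 : Cs σ * (|g₀| * ∑ i, |u₁ i - u₂ i|) ≤ Cs σ * (Γ * (Real.sqrt n * Sd)) := by
    apply mul_le_mul_of_nonneg_left _ (Cs_nonneg σ)
    exact mul_le_mul hgbd hCS hsumd0 hΓ.le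
  have e3 : Cs σ * (Γ * (Real.sqrt n * Sd))
      ≤ Cs σ * (Γ * (Real.sqrt n * (Real.sqrt A * (n:ℝ) ^ (-(1 + 2 * b) / 2)))) := by
    have hCσ := Cs_nonneg σ
    have hsn : (0:ℝ) ≤ Real.sqrt n := Real.sqrt_nonneg _
    gcongr
  have e4 : Cs σ * (Γ * (Real.sqrt n * (Real.sqrt A * (n:ℝ) ^ (-(1 + 2 * b) / 2))))
      = K * (n:ℝ) ^ (-b) := by
    rw [hK_def, ← hpow]
    ring
  have e5 : K * (n:ℝ) ^ (-b) < δ := by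
    have := (lt_div_iff₀ hK).1 hnev
    linarith
  linarith
end

section
/- (Slow fading converse, upper bound of the main theorem.) Fix A > 0, σ > 0, Γ > 0, a nonempty set 𝒢 ⊆ [−Γ, Γ], reals λ₁, λ₂ ≥ 0 with λ₁ + λ₂ < 1, and b > 0. Then there exists n₀ such that for all n ≥ n₀ the following holds: if u₁, …, u_M ∈ ℝⁿ satisfy ‖u_i‖² ≤ nA for every i, and there are decoding-region families D^{(1)}, …, D^{(M)} such that for every g ∈ 𝒢 one has P_g(u_i, D^{(i)}) ≥ 1 − λ₁ for every i and P_g(u_i, D^{(j)}) ≤ λ₂ for every ordered pair i ≠ j, then M ≤ (1 + 2·n^{1+b})^n. In particular, the DI capacity of the slow-fading Gaussian channel in the scale L(n,R) = 2^{n·log₂(n)·R} is at most 1. -/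
open MeasureTheory ProbabilityTheory

section Aux
open Real Metric
open scoped ENNReal NNReal

lemma lintegral_le_of_forall_meas_le {α : Type*} [MeasurableSpace α] (μ ν : Measure α)
    [IsProbabilityMeasure μ] [IsProbabilityMeasure ν] (ε : ℝ≥0∞)
    (h : ∀ T : Set α, MeasurableSet T → μ T ≤ ν T + ε)
    {f : α → ℝ≥0∞} (hf : Measurable f) (hf1 : ∀ x, f x ≤ 1) :
    ∫⁻ x, f x ∂μ ≤ ∫⁻ x, f x ∂ν + ε := by
  have hfin : ∀ x, f x ≠ ∞ := fun x => (lt_of_le_of_lt (hf1 x) (by norm_num)).ne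
  have hre : ∀ (ρ : Measure α), ∫⁻ x, f x ∂ρ = ∫⁻ t in Set.Ioi 0, ρ {a | t < (f a).toReal} := by
    intro ρ
    have := lintegral_eq_lintegral_meas_lt ρ
      (f := fun x => (f x).toReal) (ae_of_all _ fun x => ENNReal.toReal_nonneg)
      (hf.ennreal_toReal.aemeasurable)
    rw [← this]
    congr 1; funext x; rw [ENNReal.ofReal_toReal (hfin x)]
  rw [hre μ, hre ν]
  have hsplit : Set.Ioi (0:ℝ) = Set.Ioc (0:ℝ) 1 ∪ Set.Ioi 1 :=
    (Set.Ioc_union_Ioi_eq_Ioi zero_le_one).symm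
  have hdisj : Disjoint (Set.Ioc (0:ℝ) 1) (Set.Ioi 1) := Set.Ioc_disjoint_Ioi le_rfl
  have hzero : ∀ (ρ : Measure α) (t : ℝ), 1 < t → ρ {a | t < (f a).toReal} = 0 := by
    intro ρ t ht
    convert measure_empty (μ := ρ)
    ext a; simp only [Set.mem_setOf_eq, Set.mem_empty_iff_false, iff_false, not_lt]
    exact le_trans (ENNReal.toReal_le_of_le_ofReal zero_le_one (by simpa using hf1 a)) ht.le
  have hIoi : ∀ ρ : Measure α, ∫⁻ t in Set.Ioi (0:ℝ), ρ {a | t < (f a).toReal}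
      = ∫⁻ t in Set.Ioc (0:ℝ) 1, ρ {a | t < (f a).toReal} := by
    intro ρ
    rw [hsplit, lintegral_union measurableSet_Ioi hdisj]
    have : ∫⁻ t in Set.Ioi (1:ℝ), ρ {a | t < (f a).toReal} = 0 := by
      rw [setLIntegral_congr_fun measurableSet_Ioi (fun t ht => hzero ρ t ht)]
      simp
    rw [this, add_zero]
  rw [hIoi μ, hIoi ν]
  calc ∫⁻ t in Set.Ioc (0:ℝ) 1, μ {a | t < (f a).toReal}
      ≤ ∫⁻ t in Set.Ioc (0:ℝ) 1, (ν {a | t < (f a).toReal} + ε) := by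
        refine setLIntegral_mono' measurableSet_Ioc fun t _ => ?_
        exact h _ (measurableSet_lt measurable_const hf.ennreal_toReal)
    _ = (∫⁻ t in Set.Ioc (0:ℝ) 1, ν {a | t < (f a).toReal}) + ε * volume (Set.Ioc (0:ℝ) 1) := by
        rw [lintegral_add_right _ measurable_const, setLIntegral_const]
    _ ≤ (∫⁻ t in Set.Ioc (0:ℝ) 1, ν {a | t < (f a).toReal}) + ε := by
        rw [Real.volume_Ioc]; simp

lemma pi_meas_le {α : Type*} [MeasurableSpace α] :
    ∀ {n : ℕ} (μ ν : Fin n → Measure α), (∀ i, IsProbabilityMeasure (μ i)) →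
    (∀ i, IsProbabilityMeasure (ν i)) → ∀ (ε : Fin n → ℝ≥0∞),
    (∀ t (T : Set α), MeasurableSet T → μ t T ≤ ν t T + ε t) →
    ∀ (S : Set (Fin n → α)), MeasurableSet S →
    Measure.pi μ S ≤ Measure.pi ν S + ∑ t, ε t := by
  intro n
  induction n with
  | zero =>
    intro μ ν hμp hνp ε h S hS
    haveI := hμp; haveI := hνp
    rcases Set.eq_empty_or_nonempty S with rfl | hne
    · simp
    · rw [hne.eq_univ]
      simp [measure_univ]
  | succ n ih =>
    intro μ ν hμp hνp ε h S hS
    haveI := hμp; haveI := hνp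
    set e := MeasurableEquiv.piFinSuccAbove (fun _ : Fin (n+1) => α) 0 with he
    set T := e.symm ⁻¹' S with hTdef
    have hT : MeasurableSet T := e.symm.measurable hS
    have hST : e ⁻¹' T = S := by
      rw [hTdef, ← Set.preimage_comp]
      simp
    have hμ := measurePreserving_piFinSuccAbove μ 0
    have hν := measurePreserving_piFinSuccAbove ν 0
    have h1 : Measure.pi μ S
        = ((μ 0).prod (Measure.pi fun j => μ ((0 : Fin (n+1)).succAbove j))) T := by
      rw [← hST]; exact hμ.measure_preimage hT.nullMeasurableSet
    have h2 : Measure.pi ν S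
        = ((ν 0).prod (Measure.pi fun j => ν ((0 : Fin (n+1)).succAbove j))) T := by
      rw [← hST]; exact hν.measure_preimage hT.nullMeasurableSet
    rw [h1, h2, Measure.prod_apply hT, Measure.prod_apply hT]
    have hpt : ∀ x : α,
        Measure.pi (fun j => μ ((0 : Fin (n+1)).succAbove j)) (Prod.mk x ⁻¹' T)
        ≤ Measure.pi (fun j => ν ((0 : Fin (n+1)).succAbove j)) (Prod.mk x ⁻¹' T)
          + ∑ j, ε ((0 : Fin (n+1)).succAbove j) := fun x =>
      ih _ _ (fun j => hμp _) (fun j => hνp _) _ (fun j => h _)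
        _ (measurable_prodMk_left hT)
    calc ∫⁻ x, Measure.pi (fun j => μ ((0 : Fin (n+1)).succAbove j)) (Prod.mk x ⁻¹' T) ∂(μ 0)
        ≤ ∫⁻ x, (Measure.pi (fun j => ν ((0 : Fin (n+1)).succAbove j)) (Prod.mk x ⁻¹' T)
            + ∑ j, ε ((0 : Fin (n+1)).succAbove j)) ∂(μ 0) := lintegral_mono hpt
      _ = (∫⁻ x, Measure.pi (fun j => ν ((0 : Fin (n+1)).succAbove j)) (Prod.mk x ⁻¹' T) ∂(μ 0))
            + ∑ j, ε ((0 : Fin (n+1)).succAbove j) := by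
          rw [lintegral_add_right _ measurable_const, lintegral_const, measure_univ, mul_one]
      _ ≤ ((∫⁻ x, Measure.pi (fun j => ν ((0 : Fin (n+1)).succAbove j)) (Prod.mk x ⁻¹' T) ∂(ν 0))
            + ε 0) + ∑ j, ε ((0 : Fin (n+1)).succAbove j) := by
          gcongr
          refine lintegral_le_of_forall_meas_le (μ 0) (ν 0) (ε 0) (fun U hU => h 0 U hU)
            (measurable_measure_prodMk_left hT) (fun x => prob_le_one)
      _ = (∫⁻ x, Measure.pi (fun j => ν ((0 : Fin (n+1)).succAbove j)) (Prod.mk x ⁻¹' T) ∂(ν 0))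
            + ∑ t, ε t := by
          rw [Fin.sum_univ_succAbove ε 0]; ring

section OneD
variable {σ : ℝ}

lemma gauss_pdf_le (hσ : 0 < σ) (m x : ℝ) :
    gaussianPDFReal m ⟨σ^2, sq_nonneg σ⟩ x ≤ 1/σ := by
  unfold gaussianPDFReal
  have h1 : Real.exp (- (x - m)^2 / (2 * ((⟨σ^2, sq_nonneg σ⟩ : ℝ≥0) : ℝ))) ≤ 1 := by
    rw [Real.exp_le_one_iff]
    apply div_nonpos_of_nonpos_of_nonneg
    · simp [sq_nonneg]
    · positivity
  have h2 : (Real.sqrt (2 * π * ((⟨σ^2, sq_nonneg σ⟩ : ℝ≥0) : ℝ)))⁻¹ ≤ 1/σ := by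
    rw [one_div]
    apply inv_anti₀ hσ
    calc σ = Real.sqrt (σ^2) := (Real.sqrt_sq hσ.le).symm
      _ ≤ Real.sqrt (2 * π * σ^2) := by
          apply Real.sqrt_le_sqrt
          nlinarith [Real.pi_gt_three, sq_nonneg σ]
  calc (Real.sqrt (2 * π * ((⟨σ^2, sq_nonneg σ⟩ : ℝ≥0) : ℝ)))⁻¹
        * Real.exp (- (x - m)^2 / (2 * ((⟨σ^2, sq_nonneg σ⟩ : ℝ≥0) : ℝ)))
      ≤ (Real.sqrt (2 * π * ((⟨σ^2, sq_nonneg σ⟩ : ℝ≥0) : ℝ)))⁻¹ * 1 := by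
        apply mul_le_mul_of_nonneg_left h1 (by positivity)
    _ ≤ 1/σ := by rw [mul_one]; exact h2

lemma gauss_pdf_mono (hσ : 0 < σ) {α β x : ℝ} (hαβ : α ≤ β) (hx : x ≤ (α + β)/2) :
    gaussianPDFReal β ⟨σ^2, sq_nonneg σ⟩ x ≤ gaussianPDFReal α ⟨σ^2, sq_nonneg σ⟩ x := by
  unfold gaussianPDFReal
  have hv : (0:ℝ) < 2 * ((⟨σ^2, sq_nonneg σ⟩ : ℝ≥0) : ℝ) := by positivity
  apply mul_le_mul_of_nonneg_left _ (by positivity)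
  rw [Real.exp_le_exp]
  apply div_le_div_of_nonneg_right _ hv.le |>.trans_eq rfl
  nlinarith

lemma gauss_pdf_antimono (hσ : 0 < σ) {α β x : ℝ} (hαβ : α ≤ β) (hx : (α + β)/2 ≤ x) :
    gaussianPDFReal α ⟨σ^2, sq_nonneg σ⟩ x ≤ gaussianPDFReal β ⟨σ^2, sq_nonneg σ⟩ x := by
  unfold gaussianPDFReal
  have hv : (0:ℝ) < 2 * ((⟨σ^2, sq_nonneg σ⟩ : ℝ≥0) : ℝ) := by positivity
  apply mul_le_mul_of_nonneg_left _ (by positivity)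
  rw [Real.exp_le_exp]
  apply div_le_div_of_nonneg_right _ hv.le |>.trans_eq rfl
  nlinarith

end OneD

section OneD2
variable {σ : ℝ}

lemma gauss_tv_onesided (hσ : 0 < σ) {α β : ℝ} (hαβ : α ≤ β) :
    ∫⁻ x, (gaussianPDF α ⟨σ^2, sq_nonneg σ⟩ x - gaussianPDF β ⟨σ^2, sq_nonneg σ⟩ x)
      ≤ ENNReal.ofReal ((β - α)/σ) := by
  set v : ℝ≥0 := ⟨σ^2, sq_nonneg σ⟩ with hvdef
  have hv : v ≠ 0 := by
    simp only [hvdef, ne_eq, ← NNReal.coe_eq_zero, NNReal.coe_mk]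
    exact fun h => pow_ne_zero 2 hσ.ne' (congrArg Subtype.val h)
  set m := (α + β)/2 with hm
  have hind : ∀ x, gaussianPDF α v x - gaussianPDF β v x
      = (Set.Iio m).indicator (fun x => gaussianPDF α v x - gaussianPDF β v x) x := by
    intro x
    by_cases hx : x ∈ Set.Iio m
    · rw [Set.indicator_of_mem hx]
    · rw [Set.indicator_of_notMem hx]
      have hxm : m ≤ x := not_lt.mp hx
      have : gaussianPDF α v x ≤ gaussianPDF β v x :=
        ENNReal.ofReal_le_ofReal (gauss_pdf_antimono hσ hαβ hxm)
      exact tsub_eq_zero_of_le this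
    -- rewrite integrand
  calc ∫⁻ x, (gaussianPDF α v x - gaussianPDF β v x)
      = ∫⁻ x in Set.Iio m, (gaussianPDF α v x - gaussianPDF β v x) := by
        rw [lintegral_congr hind]
        exact lintegral_indicator measurableSet_Iio _
    _ = (∫⁻ x in Set.Iio m, gaussianPDF α v x) - ∫⁻ x in Set.Iio m, gaussianPDF β v x := by
        refine lintegral_sub (measurable_gaussianPDF β v) ?_ ?_
        · refine ne_of_lt (lt_of_le_of_lt (le_trans (setLIntegral_le_lintegral _ _) ?_)
            (by norm_num : (1:ℝ≥0∞) < ⊤))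
          rw [lintegral_gaussianPDF_eq_one β hv]
        · refine (ae_restrict_iff' measurableSet_Iio).mpr (ae_of_all _ fun x hx => ?_)
          exact ENNReal.ofReal_le_ofReal (gauss_pdf_mono hσ hαβ (le_of_lt hx))
    _ = gaussianReal α v (Set.Iio m) - gaussianReal β v (Set.Iio m) := by
        rw [gaussianReal_apply α hv, gaussianReal_apply β hv]
    _ ≤ ENNReal.ofReal ((β - α)/σ) := by
        rw [tsub_le_iff_right]
        -- express via centered gaussian
        have hmap : ∀ γ : ℝ, gaussianReal γ v (Set.Iio m)
            = gaussianReal 0 v (Set.Iio (m - γ)) := by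
          intro γ
          have h1 : (gaussianReal 0 v).map (· + γ) = gaussianReal γ v := by
            rw [gaussianReal_map_add_const γ, zero_add]
          rw [← h1, Measure.map_apply (measurable_add_const γ) measurableSet_Iio]
          congr 1
          ext x
          simp [Set.mem_Iio, lt_sub_iff_add_lt]
        rw [hmap α, hmap β]
        set c := (β - α)/2 with hc
        have hcm : m - α = c := by rw [hm, hc]; ring
        have hcm' : m - β = -c := by rw [hm, hc]; ring
        rw [hcm, hcm']
        have hsplit : Set.Iio c = Set.Iio (-c) ∪ Set.Ico (-c) c := by
          rw [Set.Iio_union_Ico_eq_Iio]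
          linarith [sub_nonneg.mpr hαβ]
        rw [hsplit]
        refine le_trans (measure_union_le _ _) ?_
        rw [add_comm]
        gcongr
        -- measure of Ico ≤ len / σ
        rw [gaussianReal_apply 0 hv]
        calc ∫⁻ x in Set.Ico (-c) c, gaussianPDF 0 v x
            ≤ ∫⁻ _ in Set.Ico (-c) c, ENNReal.ofReal (1/σ) := by
              refine setLIntegral_mono' measurableSet_Ico fun x _ => ?_
              exact ENNReal.ofReal_le_ofReal (gauss_pdf_le hσ 0 x)
          _ = ENNReal.ofReal (1/σ) * volume (Set.Ico (-c) c) := setLIntegral_const _ _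
          _ ≤ ENNReal.ofReal ((β - α)/σ) := by
              rw [Real.volume_Ico, ← ENNReal.ofReal_mul (by positivity)]
              apply ENNReal.ofReal_le_ofReal
              rw [hc]
              rw [div_mul_eq_mul_div, one_mul]
              apply le_of_eq
              ring
end OneD2

section OneD3
variable {σ : ℝ}

lemma gaussPDFReal_neg (γ : ℝ) (v : ℝ≥0) (x : ℝ) :
    gaussianPDFReal γ v (-x) = gaussianPDFReal (-γ) v x := by
  rw [gaussianPDFReal, gaussianPDFReal]
  congr 2
  ring

lemma gauss_tv_both (hσ : 0 < σ) (α β : ℝ) :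
    ∫⁻ x, (gaussianPDF α ⟨σ^2, sq_nonneg σ⟩ x - gaussianPDF β ⟨σ^2, sq_nonneg σ⟩ x)
      ≤ ENNReal.ofReal (|α - β|/σ) := by
  rcases le_total α β with hab | hab
  · refine le_trans (gauss_tv_onesided hσ hab) ?_
    rw [abs_sub_comm, abs_of_nonneg (sub_nonneg.mpr hab)]
  · have hrefl : ∫⁻ x, (gaussianPDF α ⟨σ^2, sq_nonneg σ⟩ x - gaussianPDF β ⟨σ^2, sq_nonneg σ⟩ x)
        = ∫⁻ x, (gaussianPDF (-α) ⟨σ^2, sq_nonneg σ⟩ x - gaussianPDF (-β) ⟨σ^2, sq_nonneg σ⟩ x) := by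
      set v : ℝ≥0 := ⟨σ^2, sq_nonneg σ⟩ with hvdef
      conv_lhs => rw [← Measure.map_neg_eq_self (volume : Measure ℝ)]
      rw [lintegral_map (f := fun x => gaussianPDF α v x - gaussianPDF β v x) ((measurable_gaussianPDF α _).sub (measurable_gaussianPDF β _))
        measurable_neg]
      congr 1
      funext x
      rw [gaussianPDF, gaussianPDF, gaussianPDF, gaussianPDF,
        gaussPDFReal_neg, gaussPDFReal_neg]
    rw [hrefl]
    refine le_trans (gauss_tv_onesided hσ (neg_le_neg hab)) ?_
    apply ENNReal.ofReal_le_ofReal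
    rw [abs_of_nonneg (sub_nonneg.mpr hab)]
    apply le_of_eq
    ring

lemma gauss_meas_le (hσ : 0 < σ) (α β : ℝ) (T : Set ℝ) (hT : MeasurableSet T) :
    gaussianReal α ⟨σ^2, sq_nonneg σ⟩ T
      ≤ gaussianReal β ⟨σ^2, sq_nonneg σ⟩ T + ENNReal.ofReal (|α - β|/σ) := by
  set v : ℝ≥0 := ⟨σ^2, sq_nonneg σ⟩ with hvdef
  have hv : v ≠ 0 := by
    simp only [hvdef, ne_eq, ← NNReal.coe_eq_zero, NNReal.coe_mk]
    exact fun h => pow_ne_zero 2 hσ.ne' (congrArg Subtype.val h)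
  rw [gaussianReal_apply α hv, gaussianReal_apply β hv]
  calc ∫⁻ x in T, gaussianPDF α v x
      ≤ ∫⁻ x in T, (gaussianPDF β v x + (gaussianPDF α v x - gaussianPDF β v x)) := by
        refine lintegral_mono fun x => ?_
        rw [add_comm]
        exact le_tsub_add
    _ = (∫⁻ x in T, gaussianPDF β v x) + ∫⁻ x in T, (gaussianPDF α v x - gaussianPDF β v x) := by
        exact lintegral_add_right _ ((measurable_gaussianPDF α _).sub (measurable_gaussianPDF β _))
    _ ≤ (∫⁻ x in T, gaussianPDF β v x) + ENNReal.ofReal (|α - β|/σ) := by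
        gcongr
        exact le_trans (setLIntegral_le_lintegral _ _) (gauss_tv_both hσ α β)
end OneD3

instance gaussPi_prob (n : ℕ) (σ : ℝ) : IsProbabilityMeasure (gaussPi n σ) := by
  unfold gaussPi
  have h : ∀ v : ℝ≥0, IsProbabilityMeasure (Measure.pi fun _ : Fin n => gaussianReal 0 v) :=
    fun v => inferInstance
  exact h _

lemma gaussPi_shift_le (n : ℕ) {σ : ℝ} (hσ : 0 < σ) (a c : Fin n → ℝ)
    (S : Set (Fin n → ℝ)) (hS : MeasurableSet S) :
    gaussPi n σ {z | (fun t => a t + z t) ∈ S}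
      ≤ gaussPi n σ {z | (fun t => c t + z t) ∈ S}
        + ENNReal.ofReal (∑ t, |a t - c t| / σ) := by
  have hmap : ∀ w : Fin n → ℝ, gaussPi n σ {z | (fun t => w t + z t) ∈ S}
      = Measure.pi (fun t => gaussianReal (w t) ⟨σ^2, sq_nonneg σ⟩) S := by
    intro w
    have hmp : MeasurePreserving (fun (z : Fin n → ℝ) (t : Fin n) => w t + z t)
        (gaussPi n σ) (Measure.pi (fun t => gaussianReal (w t) ⟨σ^2, sq_nonneg σ⟩)) := by
      have hsf : ∀ (m : ℝ) (v : ℝ≥0), SigmaFinite (gaussianReal m v) := fun _ _ => inferInstance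
      refine measurePreserving_pi (hν := fun t => hsf _ _) _ _ (fun t => ⟨measurable_const_add _, ?_⟩)
      exact (gaussianReal_map_const_add (w t)).trans (by simp only [zero_add])
    exact hmp.measure_preimage hS.nullMeasurableSet
  rw [hmap a, hmap c]
  have := pi_meas_le (fun t => gaussianReal (a t) ⟨σ^2, sq_nonneg σ⟩)
    (fun t => gaussianReal (c t) ⟨σ^2, sq_nonneg σ⟩)
    (fun t => instIsProbabilityMeasureGaussianReal _ _) (fun t => instIsProbabilityMeasureGaussianReal _ _)
    (fun t => ENNReal.ofReal (|a t - c t| / σ))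
    (fun t T hT => gauss_meas_le hσ (a t) (c t) T hT) S hS
  refine le_trans this ?_
  gcongr
  rw [← ENNReal.ofReal_sum_of_nonneg (fun t _ => by positivity)]

lemma accProbSlow_diff (n : ℕ) {σ : ℝ} (hσ : 0 < σ) (g : ℝ) (x y : Fin n → ℝ)
    (D : ℝ → Set (Fin n → ℝ)) (hD : MeasurableSet (D g)) :
    accProbSlow n σ g x D ≤ accProbSlow n σ g y D + (|g| / σ) * ∑ t, |x t - y t| := by
  have key := gaussPi_shift_le n hσ (fun t => g * x t) (fun t => g * y t) (D g) hD
  have hsum : ∑ t, |g * x t - g * y t| / σ = (|g| / σ) * ∑ t, |x t - y t| := by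
    rw [Finset.mul_sum]
    congr 1; funext t
    rw [← mul_sub, abs_mul]
    ring
  rw [hsum] at key
  have hfin : gaussPi n σ {z | (fun t => g * y t + z t) ∈ D g} ≠ ⊤ :=
    (measure_lt_top _ _).ne
  have hnn : 0 ≤ (|g| / σ) * ∑ t, |x t - y t| := by positivity
  unfold accProbSlow
  calc (gaussPi n σ {z | (fun t => g * x t + z t) ∈ D g}).toReal
      ≤ (gaussPi n σ {z | (fun t => g * y t + z t) ∈ D g}
          + ENNReal.ofReal ((|g| / σ) * ∑ t, |x t - y t|)).toReal := by
        apply ENNReal.toReal_mono _ key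
        exact ENNReal.add_ne_top.mpr ⟨hfin, ENNReal.ofReal_ne_top⟩
    _ = (gaussPi n σ {z | (fun t => g * y t + z t) ∈ D g}).toReal
          + (|g| / σ) * ∑ t, |x t - y t| := by
        rw [ENNReal.toReal_add hfin ENNReal.ofReal_ne_top, ENNReal.toReal_ofReal hnn]

lemma packing_bound {n M : ℕ} (hn : 0 < n) (v : Fin M → EuclideanSpace ℝ (Fin n))
    {r R : ℝ} (hr : 0 < r) (hR : 0 ≤ R) (hRv : ∀ i, ‖v i‖ ≤ R)
    (hsep : ∀ i j, i ≠ j → 2 * r ≤ dist (v i) (v j)) :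
    (M : ℝ) ≤ ((R + r) / r) ^ n := by
  haveI : Nonempty (Fin n) := ⟨⟨0, hn⟩⟩
  have hfr : Module.finrank ℝ (EuclideanSpace ℝ (Fin n)) = n := by simp
  set V : ℝ≥0∞ := volume (ball (0 : EuclideanSpace ℝ (Fin n)) 1) with hV
  have hV0 : V ≠ 0 := (measure_ball_pos volume (0:EuclideanSpace ℝ (Fin n)) one_pos).ne'
  have hVt : V ≠ ⊤ := measure_ball_lt_top.ne
  have hdisj : Pairwise (Function.onFun Disjoint (fun i => ball (v i) r)) := by
    intro i j hij
    exact ball_disjoint_ball (by linarith [hsep i j hij])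
  have hsub : (⋃ i, ball (v i) r) ⊆ ball (0 : EuclideanSpace ℝ (Fin n)) (R + r) := by
    rintro x hx
    rcases Set.mem_iUnion.mp hx with ⟨i, hi⟩
    rw [mem_ball] at hi ⊢
    calc dist x 0 ≤ dist x (v i) + dist (v i) 0 := dist_triangle _ _ _
      _ < r + R := by
          rw [dist_zero_right]
          exact add_lt_add_of_lt_of_le hi (hRv i)
      _ = R + r := by ring
  have hmeas : volume (⋃ i, ball (v i) r) = ∑' i, volume (ball (v i) r) :=
    measure_iUnion hdisj fun i => measurableSet_ball
  have hballs : ∀ i, volume (ball (v i) r) = ENNReal.ofReal (r ^ n) * V := by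
    intro i
    rw [hV, Measure.addHaar_ball volume (v i) hr.le, hfr]
  have hbig : volume (ball (0 : EuclideanSpace ℝ (Fin n)) (R + r)) = ENNReal.ofReal ((R + r) ^ n) * V := by
    rw [hV, Measure.addHaar_ball volume 0 (by linarith), hfr]
  have hchain : (M : ℝ≥0∞) * (ENNReal.ofReal (r ^ n) * V)
      ≤ ENNReal.ofReal ((R + r) ^ n) * V := by
    calc (M : ℝ≥0∞) * (ENNReal.ofReal (r ^ n) * V)
        = ∑' i : Fin M, volume (ball (v i) r) := by
          rw [tsum_fintype]
          simp [hballs, Finset.sum_const, nsmul_eq_mul]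
      _ = volume (⋃ i, ball (v i) r) := hmeas.symm
      _ ≤ volume (ball (0 : EuclideanSpace ℝ (Fin n)) (R + r)) := measure_mono hsub
      _ = ENNReal.ofReal ((R + r) ^ n) * V := hbig
  rw [← mul_assoc, ENNReal.mul_le_mul_iff_left hV0 hVt] at hchain
  have hrn : (0:ℝ) < r ^ n := by positivity
  have hM : (M : ℝ≥0∞) ≤ ENNReal.ofReal (((R + r) / r) ^ n) := by
    rw [div_pow, ENNReal.ofReal_div_of_pos hrn]
    exact (ENNReal.le_div_iff_mul_le (Or.inl (by simp [ENNReal.ofReal_pos, hrn]))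
      (Or.inl ENNReal.ofReal_ne_top)).mpr hchain
  calc (M : ℝ) = ((M : ℝ≥0∞)).toReal := by simp
    _ ≤ (ENNReal.ofReal (((R + r) / r) ^ n)).toReal :=
        ENNReal.toReal_mono ENNReal.ofReal_ne_top hM
    _ = ((R + r) / r) ^ n := ENNReal.toReal_ofReal (by positivity)

end Aux


set_option maxHeartbeats 2000000 in
/-- Slow fading converse (upper bound of the main theorem): for all large `n`,
any deterministic identification code for the slow-fading Gaussian channel
(with gain set `𝒢 ⊆ [−Γ,Γ]`) with codewords of power at most `nA`, worst-case
type I errors at most `lam₁` and worst-case type II errors at most `lam₂`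
(with `lam₁ + lam₂ < 1`) has at most `(1 + 2n^{1+b})^n` messages; hence the DI
capacity in the scale `2^{n·log₂(n)·R}` is at most 1. -/
theorem slowFading_DI_converse
    (A σ Γ : ℝ) (hA : 0 < A) (hσ : 0 < σ) (hΓ : 0 < Γ)
    (𝒢 : Set ℝ) (h𝒢ne : 𝒢.Nonempty) (h𝒢 : 𝒢 ⊆ Set.Icc (-Γ) Γ)
    (lam₁ lam₂ b : ℝ) (hlam₁ : 0 ≤ lam₁) (hlam₂ : 0 ≤ lam₂)
    (hlam : lam₁ + lam₂ < 1) (hb : 0 < b) :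
    ∃ n₀ : ℕ, ∀ n ≥ n₀, ∀ (M : ℕ) (u : Fin M → (Fin n → ℝ))
      (D : Fin M → (ℝ → Set (Fin n → ℝ))),
      (∀ i, ∑ t, u i t ^ 2 ≤ (n : ℝ) * A) →
      (∀ i, MeasurableSet {p : ℝ × (Fin n → ℝ) | p.2 ∈ D i p.1}) →
      (∀ g ∈ 𝒢, ∀ i, 1 - lam₁ ≤ accProbSlow n σ g (u i) (D i)) →
      (∀ g ∈ 𝒢, ∀ i j, i ≠ j → accProbSlow n σ g (u i) (D j) ≤ lam₂) →
      (M : ℝ) ≤ (1 + 2 * (n : ℝ) ^ ((1 : ℝ) + b)) ^ n := by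
  obtain ⟨g₀, hg₀⟩ := h𝒢ne
  set ε : ℝ := 1 - lam₁ - lam₂ with hε
  have hεpos : 0 < ε := by rw [hε]; linarith
  set C : ℝ := Real.sqrt A * |g₀| / (ε * σ) with hC
  have hC0 : 0 ≤ C := by positivity
  refine ⟨max 1 (⌈C ^ ((1:ℝ)/b)⌉₊ + 1), fun n hn M u D hpow hmeas h1 h2 => ?_⟩
  have hn1 : 1 ≤ n := le_trans (le_max_left _ _) hn
  have hnpos : (0:ℝ) < n := by exact_mod_cast hn1
  have hrpnn : (0:ℝ) ≤ (n:ℝ) ^ ((1:ℝ) + b) := Real.rpow_nonneg hnpos.le _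
  have hbase1 : (1:ℝ) ≤ 1 + 2 * (n:ℝ) ^ ((1:ℝ) + b) := by linarith
  have hRHS1 : (1:ℝ) ≤ (1 + 2 * (n:ℝ) ^ ((1:ℝ) + b)) ^ n := one_le_pow₀ hbase1
  -- `C ≤ n ^ b`
  have hnbC : C ≤ (n:ℝ) ^ (b:ℝ) := by
    have hcn : C ^ ((1:ℝ)/b) ≤ (n:ℝ) := by
      have h1' : (⌈C ^ ((1:ℝ)/b)⌉₊ + 1) ≤ n := le_trans (le_max_right _ _) hn
      have h2' : C ^ ((1:ℝ)/b) ≤ (⌈C ^ ((1:ℝ)/b)⌉₊ : ℝ) := Nat.le_ceil _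
      have h3' : ((⌈C ^ ((1:ℝ)/b)⌉₊ : ℝ) + 1) ≤ (n:ℝ) := by exact_mod_cast h1'
      linarith
    calc C = (C ^ ((1:ℝ)/b)) ^ (b:ℝ) := by
          rw [← Real.rpow_mul hC0, one_div, inv_mul_cancel₀ hb.ne', Real.rpow_one]
      _ ≤ (n:ℝ) ^ (b:ℝ) :=
          Real.rpow_le_rpow (Real.rpow_nonneg hC0 _) hcn hb.le
  by_cases hg0 : g₀ = 0
  · -- gain 0 is possible: at most one message
    have hM1 : (M:ℝ) ≤ 1 := by
      by_contra hcon
      push_neg at hcon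
      have hM2 : 2 ≤ M := by exact_mod_cast hcon
      have h0M : (0:ℕ) < M := by omega
      have h1M : (1:ℕ) < M := by omega
      set i : Fin M := ⟨0, h0M⟩
      set j : Fin M := ⟨1, h1M⟩
      have hij : i ≠ j := by simp [i, j, Fin.ext_iff]
      have e1 := h1 g₀ hg₀ j
      have e2 := h2 g₀ hg₀ i j hij
      have hset : {z : Fin n → ℝ | (fun t => g₀ * u i t + z t) ∈ D j g₀}
          = {z : Fin n → ℝ | (fun t => g₀ * u j t + z t) ∈ D j g₀} := by
        rw [hg0]; simp only [zero_mul]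
      have heq : accProbSlow n σ g₀ (u i) (D j) = accProbSlow n σ g₀ (u j) (D j) := by
        unfold accProbSlow; rw [hset]
      rw [heq] at e2
      linarith
    linarith
  · -- nonzero gain: separation of codewords
    have habs0 : 0 < |g₀| := abs_pos.mpr hg0
    set δ₁ : ℝ := ε * σ / |g₀| with hδ₁
    have hδ₁pos : 0 < δ₁ := by positivity
    have hsep : ∀ i j : Fin M, i ≠ j → δ₁ ≤ ∑ t, |u i t - u j t| := by
      intro i j hij
      have e1 := h1 g₀ hg₀ j
      have e2 := h2 g₀ hg₀ i j hij
      have hDm : MeasurableSet (D j g₀) := by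
        have h' : MeasurableSet ((fun y : Fin n → ℝ => ((g₀ : ℝ), y)) ⁻¹'
            {p : ℝ × (Fin n → ℝ) | p.2 ∈ D j p.1}) :=
          (hmeas j).preimage measurable_prodMk_left
        simpa using h'
      have hd := accProbSlow_diff n hσ g₀ (u j) (u i) (D j) hDm
      have habs : ∑ t, |u j t - u i t| = ∑ t, |u i t - u j t| := by
        refine Finset.sum_congr rfl fun t _ => abs_sub_comm _ _
      rw [habs] at hd
      have hkey : ε ≤ (|g₀| / σ) * ∑ t, |u i t - u j t| := by
        rw [hε]; linarith
      rw [hδ₁, div_le_iff₀ habs0]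
      have h5 : ε * σ ≤ ((|g₀| / σ) * ∑ t, |u i t - u j t|) * σ :=
        mul_le_mul_of_nonneg_right hkey hσ.le
      have h6 : ((|g₀| / σ) * ∑ t, |u i t - u j t|) * σ = (∑ t, |u i t - u j t|) * |g₀| := by
        field_simp
      rw [h6] at h5
      linarith
    -- move to Euclidean space
    set v : Fin M → EuclideanSpace ℝ (Fin n) :=
      fun i => (WithLp.equiv 2 (Fin n → ℝ)).symm (u i) with hv
    have hvapp : ∀ i t, v i t = u i t := fun i t => rfl
    set R : ℝ := Real.sqrt ((n:ℝ) * A) with hR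
    have hR0 : 0 ≤ R := Real.sqrt_nonneg _
    have hnorm : ∀ i, ‖v i‖ ≤ R := by
      intro i
      rw [EuclideanSpace.norm_eq]
      apply Real.sqrt_le_sqrt
      refine le_trans (le_of_eq ?_) (hpow i)
      refine Finset.sum_congr rfl fun t _ => ?_
      rw [hvapp, Real.norm_eq_abs, sq_abs]
    set r : ℝ := δ₁ / (2 * Real.sqrt n) with hr
    have hsn0 : 0 < Real.sqrt n := Real.sqrt_pos.mpr hnpos
    have hrpos : 0 < r := by positivity
    have hdist : ∀ i j : Fin M, i ≠ j → 2 * r ≤ dist (v i) (v j) := by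
      intro i j hij
      have hs := hsep i j hij
      have hcs : (∑ t, |u i t - u j t|) ^ 2 ≤ (n:ℝ) * ∑ t, (u i t - u j t) ^ 2 := by
        have := sq_sum_le_card_mul_sum_sq
          (s := (Finset.univ : Finset (Fin n))) (f := fun t => |u i t - u j t|)
        simpa [sq_abs, Finset.card_univ] using this
      have hsum2 : δ₁ ^ 2 / (n:ℝ) ≤ ∑ t, (u i t - u j t) ^ 2 := by
        rw [div_le_iff₀ hnpos]
        nlinarith [Finset.sum_nonneg (fun t (_ : t ∈ Finset.univ) => abs_nonneg (u i t - u j t))]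
      have hde : dist (v i) (v j) = Real.sqrt (∑ t, (u i t - u j t) ^ 2) := by
        rw [EuclideanSpace.dist_eq]
        congr 1
        refine Finset.sum_congr rfl fun t _ => ?_
        rw [hvapp, hvapp, Real.dist_eq, sq_abs]
      rw [hde]
      have h2r : 2 * r = δ₁ / Real.sqrt n := by
        rw [hr]
        field_simp
      rw [h2r]
      have : δ₁ / Real.sqrt n = Real.sqrt (δ₁ ^ 2 / n) := by
        rw [Real.sqrt_div (sq_nonneg δ₁), Real.sqrt_sq hδ₁pos.le]
      rw [this]
      exact Real.sqrt_le_sqrt hsum2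
    have hpack := packing_bound (by omega : 0 < n) v hrpos hR0 hnorm hdist
    refine le_trans hpack ?_
    -- compute the ratio
    have hratio : (R + r) / r = 1 + 2 * Real.sqrt A * n / δ₁ := by
      have hsA : Real.sqrt ((n:ℝ) * A) = Real.sqrt n * Real.sqrt A :=
        Real.sqrt_mul hnpos.le A
      have hsnsq : Real.sqrt n * Real.sqrt n = (n:ℝ) := Real.mul_self_sqrt hnpos.le
      rw [hR, hr, hsA]
      field_simp
      ring_nf
      nlinarith [hsnsq]
    rw [hratio]
    apply pow_le_pow_left₀ (by positivity)
    -- 2√A n / δ₁ ≤ 2 n^{1+b}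
    have hCδ : Real.sqrt A / δ₁ = C := by
      rw [hC, hδ₁]
      field_simp
    have hrpow : (n:ℝ) ^ ((1:ℝ) + b) = (n:ℝ) * (n:ℝ) ^ (b:ℝ) := by
      rw [Real.rpow_add hnpos, Real.rpow_one]
    have : 2 * Real.sqrt A * n / δ₁ = 2 * (n:ℝ) * (Real.sqrt A / δ₁) := by ring
    rw [this, hCδ, hrpow]
    have := mul_le_mul_of_nonneg_left hnbC (by positivity : (0:ℝ) ≤ 2 * (n:ℝ))
    linarith
end

section
/- (Zero capacity of the slow-fading channel when zero gain is possible.) Fix σ > 0 and a set 𝒢 ⊆ ℝ with 0 ∈ 𝒢. Then for every n ≥ 1, all vectors u₁, u₂ ∈ ℝⁿ, and every decoding-region family D (sets D_g ⊆ ℝⁿ indexed by g ∈ ℝ with each D_g measurable), one has sup_{g∈𝒢}(1 − P_g(u₁, D)) + sup_{g∈𝒢} P_g(u₂, D) ≥ 1. Consequently, for any DI code with at least two messages the sum of the type I and type II error probabilities is at least 1, and the DI capacity of the slow-fading Gaussian channel is zero (in every scale) when 0 ∈ 𝒢. -/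
open MeasureTheory ProbabilityTheory

instance (n : ℕ) (σ : ℝ) : IsProbabilityMeasure (gaussPi n σ) := by
  unfold gaussPi
  exact @Measure.pi.instIsProbabilityMeasure _ _ _ _ _ (fun _ => instIsProbabilityMeasureGaussianReal _ _)

lemma accProbSlow_nonneg (n : ℕ) (σ g : ℝ) (u : Fin n → ℝ) (D : ℝ → Set (Fin n → ℝ)) :
    0 ≤ accProbSlow n σ g u D := ENNReal.toReal_nonneg

lemma accProbSlow_le_one (n : ℕ) (σ g : ℝ) (u : Fin n → ℝ) (D : ℝ → Set (Fin n → ℝ)) :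
    accProbSlow n σ g u D ≤ 1 := by
  have h := prob_le_one (μ := gaussPi n σ)
    (s := {z : Fin n → ℝ | (fun t => g * u t + z t) ∈ D g})
  have := ENNReal.toReal_mono (by simp) h
  simpa [accProbSlow] using this

lemma accProbSlow_zero (n : ℕ) (σ : ℝ) (u u' : Fin n → ℝ) (D : ℝ → Set (Fin n → ℝ)) :
    accProbSlow n σ 0 u D = accProbSlow n σ 0 u' D := by
  unfold accProbSlow
  congr 2
  ext z
  simp

/-- If the zero gain is a possible fading value (`0 ∈ 𝒢`), then for any two
codewords and any decoding-region family, the worst-case type I error for the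
first codeword plus the worst-case type II error for the second is at least
`1`; hence the DI capacity of the slow-fading Gaussian channel is zero. -/
theorem slowFading_zero_gain_sum_errors_ge_one
    (σ : ℝ) (hσ : 0 < σ) (𝒢 : Set ℝ) (h0 : (0 : ℝ) ∈ 𝒢)
    (n : ℕ) (hn : 1 ≤ n) (u₁ u₂ : Fin n → ℝ)
    (D : ℝ → Set (Fin n → ℝ)) (hD : ∀ g : ℝ, MeasurableSet (D g)) :
    1 ≤ (⨆ g ∈ 𝒢, (1 - accProbSlow n σ g u₁ D)) +
      ⨆ g ∈ 𝒢, accProbSlow n σ g u₂ D := by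
  have hb1 : BddAbove (Set.range fun g => ⨆ _ : g ∈ 𝒢, (1 - accProbSlow n σ g u₁ D)) := by
    refine ⟨1, ?_⟩
    rintro x ⟨g, rfl⟩
    exact Real.iSup_le (fun _ => by linarith [accProbSlow_nonneg n σ g u₁ D]) one_pos.le
  have hb2 : BddAbove (Set.range fun g => ⨆ _ : g ∈ 𝒢, accProbSlow n σ g u₂ D) := by
    refine ⟨1, ?_⟩
    rintro x ⟨g, rfl⟩
    exact Real.iSup_le (fun _ => accProbSlow_le_one n σ g u₂ D) one_pos.le
  have h1 : (1 - accProbSlow n σ 0 u₁ D) ≤ ⨆ g ∈ 𝒢, (1 - accProbSlow n σ g u₁ D) := by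
    refine le_trans ?_ (le_ciSup hb1 0)
    exact le_ciSup_of_le (by
      refine ⟨1, ?_⟩
      rintro x ⟨_, rfl⟩
      simp only []
      linarith [accProbSlow_nonneg n σ 0 u₁ D]) h0 le_rfl
  have h2 : accProbSlow n σ 0 u₂ D ≤ ⨆ g ∈ 𝒢, accProbSlow n σ g u₂ D := by
    refine le_trans ?_ (le_ciSup hb2 0)
    exact le_ciSup_of_le (by
      refine ⟨1, ?_⟩
      rintro x ⟨_, rfl⟩
      exact accProbSlow_le_one n σ 0 u₂ D) h0 le_rfl
  have heq := accProbSlow_zero n σ u₁ u₂ D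
  linarith
end
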